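/- arXiv:2011.11173 — 9 statements merged into one kernel-verified Lean document; each statement's English description precedes it below -/
import Mathlib

section
/- (Function gap deviation) For all points x, y ∈ E, all Borel probability measures μ, ν on Z, and every constant W ≥ 0 such that |∫ g dμ − ∫ g dν| ≤ W for every 1-Lipschitz function g : Z → ℝ, one has |[f_μ(y) − f_μ(x)] − [f_ν(y) − f_ν(x)]| ≤ β · ‖y − x‖ · W. -/
open MeasureTheory Set

noncomputable section

/-- **Function gap deviation.** With `f_μ(x) = ∫ ℓ(x,z) dμ(z)` and `W` dominating the
Wasserstein-1 distance between `μ` and `ν` in the dual sense, the deviation of function gaps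
satisfies `|[f_μ(y) − f_μ(x)] − [f_ν(y) − f_ν(x)]| ≤ β·‖y − x‖·W`. -/
theorem function_gap_deviation
    {E : Type*} [NormedAddCommGroup E] [InnerProductSpace ℝ E] [FiniteDimensional ℝ E]
    {Z : Type*} [MetricSpace Z] [MeasurableSpace Z] [BorelSpace Z]
    (ℓ : E → Z → ℝ) (G : E → Z → E) (β : ℝ) (hβ : 0 ≤ β)
    (hgrad : ∀ (x : E) (z : Z), HasGradientAt (fun x' => ℓ x' z) (G x z) x)
    (hlip : ∀ (x : E) (z z' : Z), ‖G x z - G x z'‖ ≤ β * dist z z')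
    (μ ν : Measure Z) [IsProbabilityMeasure μ] [IsProbabilityMeasure ν]
    (hintμ : ∀ x : E, Integrable (fun z => ℓ x z) μ)
    (hintν : ∀ x : E, Integrable (fun z => ℓ x z) ν)
    (hintGμ : ∀ x : E, Integrable (fun z => G x z) μ)
    (hintGν : ∀ x : E, Integrable (fun z => G x z) ν)
    (hfμ : ∀ x : E, HasGradientAt (fun x' => ∫ z, ℓ x' z ∂μ) (∫ z, G x z ∂μ) x)
    (hfν : ∀ x : E, HasGradientAt (fun x' => ∫ z, ℓ x' z ∂ν) (∫ z, G x z ∂ν) x)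
    (x y : E) (W : ℝ) (hW : 0 ≤ W)
    (hdual : ∀ g : Z → ℝ, LipschitzWith 1 g → |(∫ z, g z ∂μ) - ∫ z, g z ∂ν| ≤ W) :
    |((∫ z, ℓ y z ∂μ) - ∫ z, ℓ x z ∂μ) - ((∫ z, ℓ y z ∂ν) - ∫ z, ℓ x z ∂ν)|
      ≤ β * ‖y - x‖ * W := by
  have hZ : Nonempty Z := by
    by_contra h
    rw [not_nonempty_iff] at h
    have h1 : μ univ = 1 := measure_univ
    rw [Set.univ_eq_empty_iff.mpr h, measure_empty] at h1
    exact zero_ne_one h1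
  -- generalized duality: K-Lipschitz functions
  have hdual' : ∀ (K : ℝ), 0 ≤ K → ∀ g : Z → ℝ,
      (∀ z z', |g z - g z'| ≤ K * dist z z') →
      |(∫ z, g z ∂μ) - ∫ z, g z ∂ν| ≤ K * W := by
    intro K hK g hg
    rcases hK.eq_or_lt with hK0 | hKpos
    · obtain ⟨z₀⟩ := hZ
      have hconst : ∀ z, g z = g z₀ := by
        intro z
        have h1 := hg z z₀
        rw [← hK0, zero_mul] at h1
        have := abs_nonpos_iff.mp h1
        linarith [sub_eq_zero.mp this]
      have he : (fun z => g z) = fun _ => g z₀ := funext hconst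
      rw [he, integral_const, integral_const]
      simp [← hK0]
    · set h : Z → ℝ := fun z => K⁻¹ * g z with hh
      have hlip1 : LipschitzWith 1 h := by
        apply LipschitzWith.of_dist_le_mul
        intro z z'
        simp only [NNReal.coe_one, one_mul]
        rw [Real.dist_eq]
        have heq : h z - h z' = K⁻¹ * (g z - g z') := by rw [hh]; ring
        rw [heq, abs_mul, abs_of_pos (inv_pos.mpr hKpos)]
        calc K⁻¹ * |g z - g z'| ≤ K⁻¹ * (K * dist z z') :=
              mul_le_mul_of_nonneg_left (hg z z') (le_of_lt (inv_pos.mpr hKpos))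
          _ = dist z z' := by field_simp
      have h3 := hdual h hlip1
      rw [hh] at h3
      simp only [integral_const_mul] at h3
      have h2 : |K⁻¹ * ((∫ z, g z ∂μ) - ∫ z, g z ∂ν)| ≤ W := by
        rw [mul_sub]; exact h3
      rw [abs_mul, abs_of_pos (inv_pos.mpr hKpos)] at h2
      calc |(∫ z, g z ∂μ) - ∫ z, g z ∂ν|
          = K * (K⁻¹ * |(∫ z, g z ∂μ) - ∫ z, g z ∂ν|) := by field_simp
        _ ≤ K * W := mul_le_mul_of_nonneg_left h2 (le_of_lt hKpos)
  -- per-point inner product bound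
  set v : E := y - x with hv
  have key : ∀ u : E,
      |(inner ℝ v ((∫ z, G u z ∂μ) - ∫ z, G u z ∂ν) : ℝ)| ≤ β * ‖v‖ * W := by
    intro u
    have h1 : (∫ z, (inner ℝ v (G u z) : ℝ) ∂μ) = inner ℝ v (∫ z, G u z ∂μ) :=
      integral_inner (hintGμ u) v
    have h2 : (∫ z, (inner ℝ v (G u z) : ℝ) ∂ν) = inner ℝ v (∫ z, G u z ∂ν) :=
      integral_inner (hintGν u) v
    have hg : ∀ z z', |(inner ℝ v (G u z) : ℝ) - inner ℝ v (G u z')| ≤ (β * ‖v‖) * dist z z' := by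
      intro z z'
      rw [← inner_sub_right]
      calc |(inner ℝ v (G u z - G u z') : ℝ)| ≤ ‖v‖ * ‖G u z - G u z'‖ :=
            abs_real_inner_le_norm v _
        _ ≤ ‖v‖ * (β * dist z z') :=
            mul_le_mul_of_nonneg_left (hlip u z z') (norm_nonneg v)
        _ = (β * ‖v‖) * dist z z' := by ring
    have h4 := hdual' (β * ‖v‖) (mul_nonneg hβ (norm_nonneg v)) _ hg
    rw [h1, h2, ← inner_sub_right] at h4
    exact h4
  -- derivative of the path function
  set F : E → ℝ := fun u => (∫ z, ℓ u z ∂μ) - ∫ z, ℓ u z ∂ν with hF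
  set γ : ℝ → E := fun t => x + t • v with hγ
  set φ := F ∘ γ with hφ
  have hγd : ∀ t : ℝ, HasDerivAt γ v t := by
    intro t
    have h5 : HasDerivAt (fun s : ℝ => s • v) ((1:ℝ) • v) t :=
      (hasDerivAt_id t).smul_const v
    simpa [hγ] using h5.const_add x
  have hFgrad : ∀ u : E, HasGradientAt F ((∫ z, G u z ∂μ) - ∫ z, G u z ∂ν) u := by
    intro u
    rw [hasGradientAt_iff_hasFDerivAt, map_sub]
    exact (hfμ u).hasFDerivAt.sub (hfν u).hasFDerivAt
  have hφd : ∀ t : ℝ, HasDerivAt φ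
      (inner ℝ ((∫ z, G (γ t) z ∂μ) - ∫ z, G (γ t) z ∂ν) v : ℝ) t := by
    intro t
    have h1 := (hFgrad (γ t)).hasFDerivAt
    have h6 := h1.comp_hasDerivAt t (hγd t)
    rw [show (inner ℝ ((∫ z, G (γ t) z ∂μ) - ∫ z, G (γ t) z ∂ν) v : ℝ)
        = inner ℝ (∫ z, G (γ t) z ∂μ) v - inner ℝ (∫ z, G (γ t) z ∂ν) v from
      inner_sub_left _ _ _]
    simpa [InnerProductSpace.toDual_apply_apply] using h6
  have hmvt : ‖φ 1 - φ 0‖ ≤ (β * ‖v‖ * W) * ‖(1:ℝ) - 0‖ := by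
    apply Convex.norm_image_sub_le_of_norm_hasDerivWithin_le
      (f' := fun t => (inner ℝ ((∫ z, G (γ t) z ∂μ) - ∫ z, G (γ t) z ∂ν) v : ℝ))
      (fun t _ => (hφd t).hasDerivWithinAt)
      (fun t _ => ?_) (convex_Icc 0 1) (left_mem_Icc.mpr zero_le_one)
      (right_mem_Icc.mpr zero_le_one)
    rw [Real.norm_eq_abs]
    beta_reduce
    rw [real_inner_comm]
    exact key (γ t)
  have hφ1 : φ 1 = F y := by simp [hφ, hγ, hv]
  have hφ0 : φ 0 = F x := by simp [hφ, hγ]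
  rw [hφ1, hφ0] at hmvt
  simp only [Real.norm_eq_abs, hF] at hmvt
  have heq : |((∫ z, ℓ y z ∂μ) - ∫ z, ℓ x z ∂μ) - ((∫ z, ℓ y z ∂ν) - ∫ z, ℓ x z ∂ν)|
      = |((∫ z, ℓ y z ∂μ) - ∫ z, ℓ y z ∂ν) - ((∫ z, ℓ x z ∂μ) - ∫ z, ℓ x z ∂ν)| := by
    congr 1; ring
  rw [heq]
  simpa using hmvt
end
end

section
/- (Gradient and function gap deviations under a Lipschitz distribution map) For all points x, y, u, v, w ∈ E the following two estimates hold: ‖∇f_x(w) − ∇f_y(w)‖ ≤ γβ·‖x − y‖, and |(f_x(u) − f_x(v)) − (f_y(u) − f_y(v))| ≤ γβ·‖x − y‖·‖u − v‖. -/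
open MeasureTheory Set

noncomputable section

/-- **Gradient and function gap deviations under a γ-Lipschitz distribution map.**
With `f_x(y) = ∫ ℓ(y,z) dD(x)(z)`, for all `x, y, u, v, w`:
`‖∇f_x(w) − ∇f_y(w)‖ ≤ γβ‖x − y‖` and
`|(f_x(u) − f_x(v)) − (f_y(u) − f_y(v))| ≤ γβ‖x − y‖‖u − v‖`. -/
theorem grad_and_gap_deviation_state_dependent
    {E : Type*} [NormedAddCommGroup E] [InnerProductSpace ℝ E] [FiniteDimensional ℝ E]
    {Z : Type*} [MetricSpace Z] [MeasurableSpace Z] [BorelSpace Z]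
    (ℓ : E → Z → ℝ) (G : E → Z → E) (β γ : ℝ) (hβ : 0 ≤ β) (hγ : 0 ≤ γ)
    (hgrad : ∀ (x : E) (z : Z), HasGradientAt (fun x' => ℓ x' z) (G x z) x)
    (hlip : ∀ (x : E) (z z' : Z), ‖G x z - G x z'‖ ≤ β * dist z z')
    (D : E → Measure Z) (hD : ∀ x : E, IsProbabilityMeasure (D x))
    (hint : ∀ x y : E, Integrable (fun z => ℓ y z) (D x))
    (hintG : ∀ x y : E, Integrable (fun z => G y z) (D x))
    (hf : ∀ x y : E, HasGradientAt (fun y' => ∫ z, ℓ y' z ∂(D x)) (∫ z, G y z ∂(D x)) y)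
    (hDlip : ∀ x y : E, ∀ g : Z → ℝ, LipschitzWith 1 g →
      |(∫ z, g z ∂(D x)) - ∫ z, g z ∂(D y)| ≤ γ * ‖x - y‖)
    (x y u v w : E) :
    ‖(∫ z, G w z ∂(D x)) - ∫ z, G w z ∂(D y)‖ ≤ γ * β * ‖x - y‖ ∧
    |((∫ z, ℓ u z ∂(D x)) - ∫ z, ℓ v z ∂(D x)) -
        ((∫ z, ℓ u z ∂(D y)) - ∫ z, ℓ v z ∂(D y))|
      ≤ γ * β * ‖x - y‖ * ‖u - v‖ := by
  haveI := hD x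
  haveI := hD y
  -- A key lemma: c-Lipschitz functions deviate by at most c * γ * ‖x - y‖.
  have key : ∀ (c : ℝ), 0 ≤ c → ∀ g : Z → ℝ, (∀ z z', |g z - g z'| ≤ c * dist z z') →
      |(∫ z, g z ∂(D x)) - ∫ z, g z ∂(D y)| ≤ c * (γ * ‖x - y‖) := by
    intro c hc g hg
    rcases hc.eq_or_lt with hc0 | hc0
    · -- c = 0: g is constant
      rcases isEmpty_or_nonempty Z with hZ | hZ
      · exfalso
        have h1 : (D x) univ = 1 := (hD x).measure_univ
        rw [Set.univ_eq_empty_iff.mpr hZ, measure_empty] at h1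
        exact zero_ne_one h1
      · obtain ⟨z₀⟩ := hZ
        have hconst : ∀ z, g z = g z₀ := by
          intro z
          have h := hg z z₀
          rw [← hc0, zero_mul] at h
          exact sub_eq_zero.mp (abs_nonpos_iff.mp h)
        have hgc : (fun z => g z) = fun _ => g z₀ := funext hconst
        rw [hgc]
        simp [integral_const, (hD x).measure_univ, (hD y).measure_univ, ← hc0]
    · -- c > 0: rescale
      have hlip1 : LipschitzWith 1 (fun z => c⁻¹ * g z) := by
        apply LipschitzWith.of_dist_le_mul
        intro z z'
        rw [Real.dist_eq, ← mul_sub, abs_mul, abs_of_nonneg (inv_nonneg.mpr hc)]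
        push_cast
        rw [one_mul]
        calc c⁻¹ * |g z - g z'| ≤ c⁻¹ * (c * dist z z') := by
              exact mul_le_mul_of_nonneg_left (hg z z') (inv_nonneg.mpr hc)
          _ = dist z z' := by field_simp
      have h1 := hDlip x y _ hlip1
      have hrw : ∀ p : E, (∫ z, g z ∂(D p)) = c * ∫ z, c⁻¹ * g z ∂(D p) := by
        intro p
        rw [← integral_const_mul]
        congr 1
        funext z
        field_simp
      rw [hrw x, hrw y, ← mul_sub, abs_mul, abs_of_nonneg hc] at *
      exact mul_le_mul_of_nonneg_left h1 hc
  constructor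
  · -- gradient part
    set V := (∫ z, G w z ∂(D x)) - ∫ z, G w z ∂(D y) with hV
    rcases eq_or_ne V 0 with h0 | h0
    · rw [h0, norm_zero]; positivity
    · set e := ‖V‖⁻¹ • V with he
      have hne : ‖V‖ ≠ 0 := norm_ne_zero_iff.mpr h0
      have hee : ‖e‖ = 1 := by
        rw [he, norm_smul, norm_inv, norm_norm, inv_mul_cancel₀ hne]
      have hg : ∀ z z', |(inner ℝ e (G w z) : ℝ) - inner ℝ e (G w z')| ≤ β * dist z z' := by
        intro z z'
        rw [← inner_sub_right]
        calc |(inner ℝ e (G w z - G w z') : ℝ)| ≤ ‖e‖ * ‖G w z - G w z'‖ :=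
              abs_real_inner_le_norm _ _
          _ = ‖G w z - G w z'‖ := by rw [hee, one_mul]
          _ ≤ β * dist z z' := hlip w z z'
      have hkey := key β hβ (fun z => inner ℝ e (G w z)) hg
      have hint' : ∀ p : E, (∫ z, (inner ℝ e (G w z) : ℝ) ∂(D p)) =
          inner ℝ e (∫ z, G w z ∂(D p)) := fun p => integral_inner (hintG p w) e
      rw [hint' x, hint' y, ← inner_sub_right] at hkey
      have hiv : (inner ℝ e V : ℝ) = ‖V‖ := by
        rw [he, real_inner_smul_left, real_inner_self_eq_norm_sq]
        field_simp
      rw [← hV, hiv, abs_of_nonneg (norm_nonneg V)] at hkey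
      calc ‖V‖ ≤ β * (γ * ‖x - y‖) := hkey
        _ = γ * β * ‖x - y‖ := by ring
  · -- gap part
    set g : Z → ℝ := fun z => ℓ u z - ℓ v z with hgdef
    have hg : ∀ z z', |g z - g z'| ≤ β * ‖u - v‖ * dist z z' := by
      intro z z'
      set L : ℝ → E := fun t => v + t • (u - v) with hL
      set φ : ℝ → ℝ := fun t => ℓ (L t) z - ℓ (L t) z' with hφ
      have hderiv : ∀ t : ℝ, HasDerivAt φ
          ((inner ℝ (G (L t) z - G (L t) z') (u - v) : ℝ)) t := by
        intro t
        have hLd : HasDerivAt L (u - v) t := by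
          have := ((hasDerivAt_id t).smul_const (u - v)).const_add v
          simpa [hL] using this
        have h1 : HasDerivAt (fun t => ℓ (L t) z) ((inner ℝ (G (L t) z) (u - v) : ℝ)) t := by
          have := ((hgrad (L t) z).hasFDerivAt).comp_hasDerivAt t hLd
          simpa [InnerProductSpace.toDual_apply_apply, Function.comp_def] using this
        have h2 : HasDerivAt (fun t => ℓ (L t) z') ((inner ℝ (G (L t) z') (u - v) : ℝ)) t := by
          have := ((hgrad (L t) z').hasFDerivAt).comp_hasDerivAt t hLd
          simpa [InnerProductSpace.toDual_apply_apply, Function.comp_def] using this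
        have := h1.sub h2
        simpa [inner_sub_left, Pi.sub_def] using this
      have hbound : ∀ t ∈ Ico (0:ℝ) 1,
          ‖(inner ℝ (G (L t) z - G (L t) z') (u - v) : ℝ)‖ ≤ β * dist z z' * ‖u - v‖ := by
        intro t _
        calc ‖(inner ℝ (G (L t) z - G (L t) z') (u - v) : ℝ)‖
            ≤ ‖G (L t) z - G (L t) z'‖ * ‖u - v‖ := by
              rw [Real.norm_eq_abs]; exact abs_real_inner_le_norm _ _
          _ ≤ β * dist z z' * ‖u - v‖ :=
              mul_le_mul_of_nonneg_right (hlip (L t) z z') (norm_nonneg _)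
      have hmv := norm_image_sub_le_of_norm_deriv_le_segment'
        (f := φ) (f' := fun t => (inner ℝ (G (L t) z - G (L t) z') (u - v) : ℝ))
        (a := 0) (b := 1) (C := β * dist z z' * ‖u - v‖)
        (fun t _ => (hderiv t).hasDerivWithinAt) hbound 1 ⟨zero_le_one, le_refl 1⟩
      have hφ1 : φ 1 = ℓ u z - ℓ u z' := by simp [hφ, hL]
      have hφ0 : φ 0 = ℓ v z - ℓ v z' := by simp [hφ, hL]
      rw [hφ1, hφ0] at hmv
      have : |g z - g z'| = ‖φ 1 - φ 0‖ := by
        rw [hφ1, hφ0, Real.norm_eq_abs]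
        congr 1
        simp [hgdef]
        ring
      rw [this, hφ1, hφ0]
      calc ‖ℓ u z - ℓ u z' - (ℓ v z - ℓ v z')‖ ≤ β * dist z z' * ‖u - v‖ * (1 - 0) := hmv
        _ = β * ‖u - v‖ * dist z z' := by ring
    have hkey := key (β * ‖u - v‖) (by positivity) g hg
    have hrw : ∀ p : E, (∫ z, g z ∂(D p)) =
        (∫ z, ℓ u z ∂(D p)) - ∫ z, ℓ v z ∂(D p) := fun p =>
      integral_sub (hint p u) (hint p v)
    rw [hrw x, hrw y] at hkey
    calc |((∫ z, ℓ u z ∂(D x)) - ∫ z, ℓ v z ∂(D x)) -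
        ((∫ z, ℓ u z ∂(D y)) - ∫ z, ℓ v z ∂(D y))| ≤ β * ‖u - v‖ * (γ * ‖x - y‖) := hkey
      _ = γ * β * ‖x - y‖ * ‖u - v‖ := by ring
end
end

section
/- (Calmness of full minimization) Let μ, ν be Borel probability measures on Z and W ≥ 0 a constant such that |∫ g dμ − ∫ g dν| ≤ W for every 1-Lipschitz g : Z → ℝ. Suppose f_μ is α-strongly convex for some α > 0, let y_μ be a minimizer over E of y ↦ f_μ(y) + r(y), and let y_ν be a minimizer over E of y ↦ f_ν(y) + r(y). Then ‖y_μ − y_ν‖ ≤ (β/α)·W. -/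
open MeasureTheory Set

open Filter
open scoped RealInnerProductSpace Topology

noncomputable section

section AuxLemmas

variable {E : Type*} [NormedAddCommGroup E] [InnerProductSpace ℝ E] [CompleteSpace E]

lemma aux_hasDerivAt_line {φ : E → ℝ} {g x : E} (hg : HasGradientAt φ g x) (v : E) :
    HasDerivAt (fun t : ℝ => φ (x + t • v)) ⟪g, v⟫ 0 := by
  have hline : HasDerivAt (fun t : ℝ => x + t • v) v (0 : ℝ) := by
    simpa using ((hasDerivAt_id (0 : ℝ)).smul_const v).const_add x
  have hF : HasFDerivAt φ (InnerProductSpace.toDual ℝ E g : E →L[ℝ] ℝ) x :=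
    hasGradientAt_iff_hasFDerivAt.mp hg
  have h0 : x + (0 : ℝ) • v = x := by simp
  rw [← h0] at hF
  have h := hF.comp_hasDerivAt (0 : ℝ) hline
  simp only [InnerProductSpace.toDual_apply_apply] at h
  exact h

lemma aux_subgrad {φ : E → ℝ} (hφ : ConvexOn ℝ univ φ) {g x : E}
    (hg : HasGradientAt φ g x) (y : E) : φ x + ⟪g, y - x⟫ ≤ φ y := by
  set ψ : ℝ → ℝ := fun t => φ (x + t • (y - x)) with hψdef
  have hψeq : ψ = φ ∘ (AffineMap.lineMap x y : ℝ →ᵃ[ℝ] E) := by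
    funext t
    simp [hψdef, AffineMap.lineMap_apply, add_comm]
  have hψconv : ConvexOn ℝ univ ψ := by
    rw [hψeq]
    have := hφ.comp_affineMap (AffineMap.lineMap x y : ℝ →ᵃ[ℝ] E)
    simpa using this
  have hder : HasDerivAt ψ ⟪g, y - x⟫ 0 := aux_hasDerivAt_line hg (y - x)
  have := hψconv.le_slope_of_hasDerivAt (mem_univ (0:ℝ)) (mem_univ (1:ℝ))
    one_pos hder
  rw [slope_def_field] at this
  have h0 : ψ 0 = φ x := by simp [hψdef]
  have h1 : ψ 1 = φ y := by simp [hψdef]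
  rw [h0, h1] at this
  norm_num at this
  linarith

lemma aux_first_order_opt {φ : E → ℝ} {g x : E} (hg : HasGradientAt φ g x)
    {r : E → ℝ} (hr : ConvexOn ℝ univ r)
    (hmin : ∀ y, φ x + r x ≤ φ y + r y) (y : E) :
    0 ≤ ⟪g, y - x⟫ + (r y - r x) := by
  set v := y - x with hv
  set ψ : ℝ → ℝ := fun t => φ (x + t • v) with hψdef
  have hder : HasDerivAt ψ ⟪g, v⟫ 0 := aux_hasDerivAt_line hg v
  have htend : Tendsto (slope ψ 0) (𝓝[>] (0:ℝ)) (𝓝 ⟪g, v⟫) :=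
    (hasDerivAt_iff_tendsto_slope.mp hder).mono_left
      (nhdsWithin_mono _ (fun t ht => ne_of_gt ht))
  have hbound : ∀ᶠ t in 𝓝[>] (0:ℝ), -(r y - r x) ≤ slope ψ 0 t := by
    filter_upwards [Ioc_mem_nhdsGT_of_mem (⟨le_refl (0:ℝ), one_pos⟩ : (0:ℝ) ∈ Ico 0 1)]
      with t ht
    have ht0 : (0:ℝ) < t := ht.1
    have ht1 : t ≤ 1 := ht.2
    have hpt : x + t • v = (1 - t) • x + t • y := by
      rw [hv, smul_sub, sub_smul, one_smul]; abel
    have hconv : r (x + t • v) ≤ (1 - t) * r x + t * r y := by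
      rw [hpt]
      exact hr.2 (mem_univ x) (mem_univ y) (by linarith) ht0.le (by ring)
    have hm := hmin (x + t • v)
    have hψ0 : ψ 0 = φ x := by simp [hψdef]
    rw [slope_def_field, hψ0]
    rw [sub_zero, le_div_iff₀ ht0]
    have : φ x + r x ≤ ψ t + ((1 - t) * r x + t * r y) := le_trans hm (by
      simp only [hψdef]; linarith)
    nlinarith
  have := ge_of_tendsto htend hbound
  linarith

lemma aux_gradient_normsq (α : ℝ) (x : E) :
    HasGradientAt (fun x : E => α / 2 * ‖x‖ ^ 2) (α • x) x := by
  have hinner : HasFDerivAt (fun x : E => ⟪x, x⟫)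
      ((fderivInnerCLM ℝ (x, x)).comp ((ContinuousLinearMap.id ℝ E).prod
        (ContinuousLinearMap.id ℝ E))) x :=
    (hasFDerivAt_id x).inner ℝ (hasFDerivAt_id x)
  have hF : HasFDerivAt (fun x : E => α / 2 * ‖x‖ ^ 2)
      (InnerProductSpace.toDual ℝ E (α • x) : E →L[ℝ] ℝ) x := by
    have h2 : HasFDerivAt (fun x : E => α / 2 * ⟪x, x⟫)
        ((α / 2) • ((fderivInnerCLM ℝ (x, x)).comp ((ContinuousLinearMap.id ℝ E).prod
          (ContinuousLinearMap.id ℝ E)))) x := hinner.const_mul (α / 2)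
    have heqf : (fun x : E => α / 2 * ⟪x, x⟫) = fun x : E => α / 2 * ‖x‖ ^ 2 := by
      funext y; rw [real_inner_self_eq_norm_sq]
    have heqd : ((α / 2) • ((fderivInnerCLM ℝ (x, x)).comp ((ContinuousLinearMap.id ℝ E).prod
          (ContinuousLinearMap.id ℝ E)))) = (InnerProductSpace.toDual ℝ E (α • x) : E →L[ℝ] ℝ) := by
      ext v
      simp [fderivInnerCLM_apply, InnerProductSpace.toDual_apply_apply, real_inner_smul_left,
        real_inner_comm]
      ring
    rw [← heqf, ← heqd]
    exact h2
  simpa using hasFDerivAt_iff_hasGradientAt.mp hF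

lemma aux_gradsub {f g : E → ℝ} {a b x : E} (hf : HasGradientAt f a x)
    (hg : HasGradientAt g b x) : HasGradientAt (fun y => f y - g y) (a - b) x := by
  have h := (hasGradientAt_iff_hasFDerivAt.mp hf).sub (hasGradientAt_iff_hasFDerivAt.mp hg)
  rw [hasGradientAt_iff_hasFDerivAt]
  rw [map_sub]
  exact h

end AuxLemmas


/-- **Calmness of full minimization.** If `f_μ` is `α`-strongly convex, `r` is convex,
and `W` dominates `W₁(μ,ν)` in the dual sense, then minimizers of `f_μ + r` and `f_ν + r`
satisfy `‖y_μ − y_ν‖ ≤ (β/α)·W`. -/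
theorem calmness_full_minimization
    {E : Type*} [NormedAddCommGroup E] [InnerProductSpace ℝ E] [FiniteDimensional ℝ E]
    {Z : Type*} [MetricSpace Z] [MeasurableSpace Z] [BorelSpace Z]
    (ℓ : E → Z → ℝ) (G : E → Z → E) (β : ℝ) (hβ : 0 ≤ β)
    (hgrad : ∀ (x : E) (z : Z), HasGradientAt (fun x' => ℓ x' z) (G x z) x)
    (hlip : ∀ (x : E) (z z' : Z), ‖G x z - G x z'‖ ≤ β * dist z z')
    (μ ν : Measure Z) [IsProbabilityMeasure μ] [IsProbabilityMeasure ν]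
    (hintμ : ∀ x : E, Integrable (fun z => ℓ x z) μ)
    (hintν : ∀ x : E, Integrable (fun z => ℓ x z) ν)
    (hintGμ : ∀ x : E, Integrable (fun z => G x z) μ)
    (hintGν : ∀ x : E, Integrable (fun z => G x z) ν)
    (hfμ : ∀ x : E, HasGradientAt (fun x' => ∫ z, ℓ x' z ∂μ) (∫ z, G x z ∂μ) x)
    (hfν : ∀ x : E, HasGradientAt (fun x' => ∫ z, ℓ x' z ∂ν) (∫ z, G x z ∂ν) x)
    (r : E → ℝ) (hr : ConvexOn ℝ univ r)
    (α : ℝ) (hα : 0 < α)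
    (hsc : ConvexOn ℝ univ (fun x => (∫ z, ℓ x z ∂μ) - α / 2 * ‖x‖ ^ 2))
    (W : ℝ) (hW : 0 ≤ W)
    (hdual : ∀ g : Z → ℝ, LipschitzWith 1 g → |(∫ z, g z ∂μ) - ∫ z, g z ∂ν| ≤ W)
    (yμ yν : E)
    (hyμ : ∀ y : E, (∫ z, ℓ yμ z ∂μ) + r yμ ≤ (∫ z, ℓ y z ∂μ) + r y)
    (hyν : ∀ y : E, (∫ z, ℓ yν z ∂ν) + r yν ≤ (∫ z, ℓ y z ∂ν) + r y) :
    ‖yμ - yν‖ ≤ (β / α) * W := by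
  set gμ : E → E := fun x => ∫ z, G x z ∂μ with hgμ
  set gν : E → E := fun x => ∫ z, G x z ∂ν with hgν
  set Δ : E := yν - yμ with hΔ
  -- strong monotonicity of gμ
  have hgradh : ∀ x : E, HasGradientAt
      (fun x => (∫ z, ℓ x z ∂μ) - α / 2 * ‖x‖ ^ 2) (gμ x - α • x) x :=
    fun x => aux_gradsub (hfμ x) (aux_gradient_normsq α x)
  have m1 := aux_subgrad hsc (hgradh yμ) yν
  have m2 := aux_subgrad hsc (hgradh yν) yμ
  have e1 : ⟪gμ yμ - α • yμ, yν - yμ⟫ = ⟪gμ yμ, Δ⟫ - α * ⟪yμ, Δ⟫ := by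
    rw [hΔ, inner_sub_left, real_inner_smul_left]
  have e2 : ⟪gμ yν - α • yν, yμ - yν⟫ = -⟪gμ yν, Δ⟫ + α * ⟪yν, Δ⟫ := by
    rw [show yμ - yν = -(yν - yμ) by abel, inner_neg_right, hΔ, inner_sub_left,
      real_inner_smul_left]
    ring
  have e3 : ⟪yν, Δ⟫ - ⟪yμ, Δ⟫ = ‖Δ‖ ^ 2 := by
    rw [← inner_sub_left, ← hΔ, real_inner_self_eq_norm_sq]
  have mono : α * ‖Δ‖ ^ 2 ≤ ⟪gμ yν, Δ⟫ - ⟪gμ yμ, Δ⟫ := by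
    rw [e1] at m1; rw [e2] at m2
    nlinarith [e3]
  -- first-order optimality
  have o1 : 0 ≤ ⟪gμ yμ, yν - yμ⟫ + (r yν - r yμ) :=
    aux_first_order_opt (hfμ yμ) hr hyμ yν
  have o2 : 0 ≤ ⟪gν yν, yμ - yν⟫ + (r yμ - r yν) :=
    aux_first_order_opt (hfν yν) hr hyν yμ
  have e4 : ⟪gν yν, yμ - yν⟫ = -⟪gν yν, Δ⟫ := by
    rw [show yμ - yν = -(yν - yμ) by abel, inner_neg_right, hΔ]
  rw [e4] at o2
  have e5 : ⟪gμ yμ, yν - yμ⟫ = ⟪gμ yμ, Δ⟫ := by rw [hΔ]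
  rw [e5] at o1
  set v : E := gμ yν - gν yν with hv
  have key : α * ‖Δ‖ ^ 2 ≤ ⟪v, Δ⟫ := by
    rw [hv, inner_sub_left]
    linarith
  -- bound on ‖v‖
  have hvbound : ‖v‖ ≤ β * W := by
    by_cases hv0 : v = 0
    · rw [hv0, norm_zero]; positivity
    · have hβ0 : 0 < β := by
        rcases hβ.lt_or_eq with h | h
        · exact h
        · exfalso; apply hv0
          have hZ : Nonempty Z := by
            by_contra hne
            rw [not_nonempty_iff] at hne
            have h1 : μ univ = 1 := measure_univ
            rw [Set.univ_eq_empty_iff.mpr hne, measure_empty] at h1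
            exact one_ne_zero h1.symm
          obtain ⟨z₀⟩ := hZ
          have hc : ∀ z, G yν z = G yν z₀ := by
            intro z
            have h2 := hlip yν z z₀
            rw [← h, zero_mul] at h2
            have h3 := le_antisymm h2 (norm_nonneg _)
            rwa [norm_eq_zero, sub_eq_zero] at h3
          have hconst : (fun z => G yν z) = fun _ => G yν z₀ := funext hc
          have hμc : gμ yν = G yν z₀ := by
            show (∫ z, G yν z ∂μ) = G yν z₀
            rw [hconst, integral_const]; simp
          have hνc : gν yν = G yν z₀ := by
            show (∫ z, G yν z ∂ν) = G yν z₀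
            rw [hconst, integral_const]; simp
          rw [hv, hμc, hνc, sub_self]
      have hvn : 0 < ‖v‖ := norm_pos_iff.mpr hv0
      set c : ℝ := β * ‖v‖ with hcdef
      have hc0 : 0 < c := mul_pos hβ0 hvn
      have hlipg : LipschitzWith 1 (fun z => c⁻¹ * ⟪v, G yν z⟫) := by
        apply LipschitzWith.of_dist_le_mul
        intro z z'
        rw [NNReal.coe_one, one_mul, Real.dist_eq]
        have hsub : c⁻¹ * ⟪v, G yν z⟫ - c⁻¹ * ⟪v, G yν z'⟫
            = c⁻¹ * ⟪v, G yν z - G yν z'⟫ := by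
          rw [inner_sub_right]; ring
        have h1 : |⟪v, G yν z - G yν z'⟫| ≤ ‖v‖ * ‖G yν z - G yν z'‖ :=
          abs_real_inner_le_norm _ _
        have h2 : ‖G yν z - G yν z'‖ ≤ β * dist z z' := hlip yν z z'
        have h3 : c⁻¹ * |⟪v, G yν z - G yν z'⟫| ≤ c⁻¹ * (‖v‖ * (β * dist z z')) := by
          apply mul_le_mul_of_nonneg_left _ (inv_pos.mpr hc0).le
          exact h1.trans (mul_le_mul_of_nonneg_left h2 (norm_nonneg _))
        have h4 : c⁻¹ * (‖v‖ * (β * dist z z')) = dist z z' := by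
          rw [hcdef]
          field_simp
        calc |c⁻¹ * ⟪v, G yν z⟫ - c⁻¹ * ⟪v, G yν z'⟫|
            = c⁻¹ * |⟪v, G yν z - G yν z'⟫| := by
              rw [hsub, abs_mul, abs_of_pos (inv_pos.mpr hc0)]
          _ ≤ c⁻¹ * (‖v‖ * (β * dist z z')) := h3
          _ = dist z z' := h4
      have hd := hdual _ hlipg
      have hvv : (∫ z, G yν z ∂μ) - (∫ z, G yν z ∂ν) = v := rfl
      have hdiff : (∫ z, c⁻¹ * ⟪v, G yν z⟫ ∂μ) - ∫ z, c⁻¹ * ⟪v, G yν z⟫ ∂ν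
          = ‖v‖ / β := by
        rw [integral_const_mul, integral_const_mul, integral_inner (hintGμ yν) v,
          integral_inner (hintGν yν) v, ← mul_sub, ← inner_sub_right, hvv,
          real_inner_self_eq_norm_sq, hcdef]
        field_simp
      rw [hdiff, abs_of_nonneg (by positivity)] at hd
      rw [div_le_iff₀ hβ0] at hd
      calc ‖v‖ ≤ W * β := hd
        _ = β * W := mul_comm _ _
  -- conclude
  have hinn : ⟪v, Δ⟫ ≤ ‖v‖ * ‖Δ‖ := real_inner_le_norm v Δ
  have final : α * ‖Δ‖ ^ 2 ≤ β * W * ‖Δ‖ := by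
    calc α * ‖Δ‖ ^ 2 ≤ ⟪v, Δ⟫ := key
      _ ≤ ‖v‖ * ‖Δ‖ := hinn
      _ ≤ β * W * ‖Δ‖ := mul_le_mul_of_nonneg_right hvbound (norm_nonneg _)
  have hnorm : ‖yμ - yν‖ = ‖Δ‖ := by rw [hΔ, norm_sub_rev]
  rw [hnorm]
  rcases (norm_nonneg Δ).lt_or_eq with hΔ0 | hΔ0
  · have h5 : α * ‖Δ‖ ≤ β * W := by nlinarith
    rw [div_mul_eq_mul_div, le_div_iff₀ hα]
    linarith
  · rw [← hΔ0]; positivity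
end
end

section
/- (Calmness of the proximal point update) Let μ, ν be Borel probability measures on Z and W ≥ 0 a constant such that |∫ g dμ − ∫ g dν| ≤ W for every 1-Lipschitz g : Z → ℝ. Suppose f_μ is α-strongly convex for some α > 0, fix x ∈ E and η > 0, let y_μ be a minimizer over E of y ↦ f_μ(y) + r(y) + (1/(2η))‖y − x‖², and let y_ν be a minimizer over E of y ↦ f_ν(y) + r(y) + (1/(2η))‖y − x‖². Then ‖y_μ − y_ν‖ ≤ (ηβ/(1 + ηα))·W. -/
open MeasureTheory Set

noncomputable section

lemma norm_combo_sq {E : Type*} [NormedAddCommGroup E] [InnerProductSpace ℝ E]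
    (a b : E) (t : ℝ) :
    ‖t • a + (1 - t) • b‖ ^ 2
      = t * ‖a‖ ^ 2 + (1 - t) * ‖b‖ ^ 2 - t * (1 - t) * ‖a - b‖ ^ 2 := by
  simp only [← real_inner_self_eq_norm_sq]
  simp only [inner_add_left, inner_add_right, inner_sub_left, inner_sub_right,
    real_inner_smul_left, real_inner_smul_right, real_inner_comm b a]
  ring

/-- **Calmness of the proximal point update.** If `f_μ` is `α`-strongly convex, `r` is convex,
and `W` dominates `W₁(μ,ν)` in the dual sense, then for any `x` and `η > 0`, minimizers of
`f_μ + r + (1/(2η))‖·−x‖²` and `f_ν + r + (1/(2η))‖·−x‖²` satisfy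
`‖y_μ − y_ν‖ ≤ (ηβ/(1+ηα))·W`. -/
theorem calmness_proximal_point
    {E : Type*} [NormedAddCommGroup E] [InnerProductSpace ℝ E] [FiniteDimensional ℝ E]
    {Z : Type*} [MetricSpace Z] [MeasurableSpace Z] [BorelSpace Z]
    (ℓ : E → Z → ℝ) (G : E → Z → E) (β : ℝ) (hβ : 0 ≤ β)
    (hgrad : ∀ (x : E) (z : Z), HasGradientAt (fun x' => ℓ x' z) (G x z) x)
    (hlip : ∀ (x : E) (z z' : Z), ‖G x z - G x z'‖ ≤ β * dist z z')
    (μ ν : Measure Z) [IsProbabilityMeasure μ] [IsProbabilityMeasure ν]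
    (hintμ : ∀ x : E, Integrable (fun z => ℓ x z) μ)
    (hintν : ∀ x : E, Integrable (fun z => ℓ x z) ν)
    (hintGμ : ∀ x : E, Integrable (fun z => G x z) μ)
    (hintGν : ∀ x : E, Integrable (fun z => G x z) ν)
    (hfμ : ∀ x : E, HasGradientAt (fun x' => ∫ z, ℓ x' z ∂μ) (∫ z, G x z ∂μ) x)
    (hfν : ∀ x : E, HasGradientAt (fun x' => ∫ z, ℓ x' z ∂ν) (∫ z, G x z ∂ν) x)
    (r : E → ℝ) (hr : ConvexOn ℝ univ r)
    (α : ℝ) (hα : 0 < α)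
    (hsc : ConvexOn ℝ univ (fun x => (∫ z, ℓ x z ∂μ) - α / 2 * ‖x‖ ^ 2))
    (W : ℝ) (hW : 0 ≤ W)
    (hdual : ∀ g : Z → ℝ, LipschitzWith 1 g → |(∫ z, g z ∂μ) - ∫ z, g z ∂ν| ≤ W)
    (x : E) (η : ℝ) (hη : 0 < η)
    (yμ yν : E)
    (hyμ : ∀ y : E, (∫ z, ℓ yμ z ∂μ) + r yμ + 1 / (2 * η) * ‖yμ - x‖ ^ 2
      ≤ (∫ z, ℓ y z ∂μ) + r y + 1 / (2 * η) * ‖y - x‖ ^ 2)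
    (hyν : ∀ y : E, (∫ z, ℓ yν z ∂ν) + r yν + 1 / (2 * η) * ‖yν - x‖ ^ 2
      ≤ (∫ z, ℓ y z ∂ν) + r y + 1 / (2 * η) * ‖y - x‖ ^ 2) :
    ‖yμ - yν‖ ≤ (η * β / (1 + η * α)) * W := by
  -- Step 1: gradient difference bound
  have hgradbound : ∀ y : E, ‖(∫ z, G y z ∂μ) - ∫ z, G y z ∂ν‖ ≤ β * W := by
    intro y
    set v : E := (∫ z, G y z ∂μ) - ∫ z, G y z ∂ν with hv
    rcases eq_or_ne v 0 with h0 | h0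
    · rw [h0, norm_zero]; positivity
    have hvpos : 0 < ‖v‖ := norm_pos_iff.mpr h0
    have hiμ : ∫ z, (innerSL ℝ v) (G y z) ∂μ = (innerSL ℝ v) (∫ z, G y z ∂μ) :=
      ContinuousLinearMap.integral_comp_comm _ (hintGμ y)
    have hiν : ∫ z, (innerSL ℝ v) (G y z) ∂ν = (innerSL ℝ v) (∫ z, G y z ∂ν) :=
      ContinuousLinearMap.integral_comp_comm _ (hintGν y)
    set g : Z → ℝ := fun z => inner ℝ v (G y z) with hg
    have hkey : (∫ z, g z ∂μ) - ∫ z, g z ∂ν = ‖v‖ ^ 2 := by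
      have : (∫ z, g z ∂μ) - ∫ z, g z ∂ν = inner ℝ v v := by
        simp only [hg]
        rw [show (fun z => (inner ℝ v (G y z) : ℝ)) = fun z => (innerSL ℝ v) (G y z) from rfl]
        rw [hiμ, hiν]
        simp only [innerSL_apply_apply]
        rw [← inner_sub_right]
      rw [this, real_inner_self_eq_norm_sq]
    rcases eq_or_lt_of_le hβ with hβ0 | hβ0
    · exfalso
      have hZ : Nonempty Z := by
        by_contra hc
        have h1 : μ univ = 1 := measure_univ
        rw [univ_eq_empty_iff.mpr (not_nonempty_iff.mp hc), measure_empty] at h1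
        exact zero_ne_one h1
      obtain ⟨z₀⟩ := hZ
      have hc : ∀ z, G y z = G y z₀ := by
        intro z
        have := hlip y z z₀
        rw [← hβ0, zero_mul] at this
        exact sub_eq_zero.mp (norm_le_zero_iff.mp this)
      have hfun : (fun z => G y z) = fun _ => G y z₀ := funext hc
      apply h0
      rw [hv, hfun]
      simp
    have hgl : LipschitzWith (⟨‖v‖ * β, by positivity⟩ : NNReal) g := by
      apply LipschitzWith.of_dist_le_mul
      intro z z'
      rw [Real.dist_eq]
      have heq : g z - g z' = inner ℝ v (G y z - G y z') := (inner_sub_right _ _ _).symm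
      rw [heq]
      calc |(inner ℝ v (G y z - G y z') : ℝ)| ≤ ‖v‖ * ‖G y z - G y z'‖ := abs_real_inner_le_norm _ _
        _ ≤ ‖v‖ * (β * dist z z') :=
            mul_le_mul_of_nonneg_left (hlip y z z') (norm_nonneg v)
        _ = ↑(⟨‖v‖ * β, by positivity⟩ : NNReal) * dist z z' := by
            show ‖v‖ * (β * dist z z') = ‖v‖ * β * dist z z'
            ring
    set c : ℝ := (‖v‖ * β)⁻¹ with hcdef
    have hcpos : 0 < c := by positivity
    have hg1 : LipschitzWith 1 (fun z => c * g z) := by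
      apply LipschitzWith.of_dist_le_mul
      intro z z'
      rw [Real.dist_eq, ← mul_sub, abs_mul, abs_of_pos hcpos]
      have h2 : |g z - g z'| ≤ ‖v‖ * β * dist z z' := by
        have := hgl.dist_le_mul z z'
        rw [Real.dist_eq] at this
        exact this
      calc c * |g z - g z'| ≤ c * (‖v‖ * β * dist z z') :=
            mul_le_mul_of_nonneg_left h2 hcpos.le
        _ = dist z z' := by
            rw [hcdef]
            have hne : ‖v‖ * β ≠ 0 := by positivity
            field_simp
        _ = ↑(1 : NNReal) * dist z z' := by simp
    have hd := hdual _ hg1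
    rw [integral_const_mul, integral_const_mul, ← mul_sub, abs_mul, abs_of_pos hcpos, hkey] at hd
    rw [abs_of_nonneg (by positivity)] at hd
    have hvle : ‖v‖ ^ 2 ≤ ‖v‖ * β * W := by
      have hm := mul_le_mul_of_nonneg_left hd (show (0:ℝ) ≤ ‖v‖ * β by positivity)
      calc ‖v‖ ^ 2 = (‖v‖ * β) * (c * ‖v‖ ^ 2) := by
            rw [hcdef]
            have hne : ‖v‖ * β ≠ 0 := by positivity
            field_simp
            try ring
        _ ≤ (‖v‖ * β) * W := hm
        _ = ‖v‖ * β * W := rfl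
    nlinarith [hvpos]
  -- Step 2: mean value bound for h = f_μ - f_ν
  have hmv : ∀ a b : E,
      |((∫ z, ℓ a z ∂μ) - ∫ z, ℓ a z ∂ν) - ((∫ z, ℓ b z ∂μ) - ∫ z, ℓ b z ∂ν)|
        ≤ β * W * ‖a - b‖ := by
    intro a b
    have hderiv : ∀ y ∈ (univ : Set E),
        HasFDerivWithinAt (fun y' => (∫ z, ℓ y' z ∂μ) - ∫ z, ℓ y' z ∂ν)
          ((InnerProductSpace.toDual ℝ E) ((∫ z, G y z ∂μ) - ∫ z, G y z ∂ν)) univ y := by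
      intro y _
      have h1 := (hfμ y).hasFDerivAt
      have h2 := (hfν y).hasFDerivAt
      have h3 := h1.sub h2
      rw [← map_sub] at h3
      exact h3.hasFDerivWithinAt
    have hbound : ∀ y ∈ (univ : Set E),
        ‖(InnerProductSpace.toDual ℝ E) ((∫ z, G y z ∂μ) - ∫ z, G y z ∂ν)‖ ≤ β * W := by
      intro y _
      rw [LinearIsometryEquiv.norm_map]
      exact hgradbound y
    have := convex_univ.norm_image_sub_le_of_norm_hasFDerivWithin_le hderiv hbound
      (mem_univ b) (mem_univ a)
    simpa [Real.norm_eq_abs] using this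
  set D : ℝ := ‖yμ - yν‖ with hD
  have hDnn : 0 ≤ D := norm_nonneg _
  -- Step 3: key inequality for each t ∈ (0,1)
  have key : ∀ t ∈ Ioo (0:ℝ) 1, (α + 1/η) * (1 - t) * D ^ 2 ≤ β * W * D := by
    rintro t ⟨ht0, ht1⟩
    have ht1' : 0 ≤ 1 - t := by linarith
    set c1 : E := t • yν + (1 - t) • yμ with hc1
    set c2 : E := t • yμ + (1 - t) • yν with hc2
    -- convexity of f_μ - α/2 ‖·‖² at c1 and c2
    have hA1 := hsc.2 (mem_univ yν) (mem_univ yμ) ht0.le ht1' (by ring)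
    have hA1' := hsc.2 (mem_univ yμ) (mem_univ yν) ht0.le ht1' (by ring)
    simp only [smul_eq_mul] at hA1 hA1'
    have hA2 := hr.2 (mem_univ yν) (mem_univ yμ) ht0.le ht1' (by ring)
    have hA2' := hr.2 (mem_univ yμ) (mem_univ yν) ht0.le ht1' (by ring)
    simp only [smul_eq_mul] at hA2 hA2'
    rw [← hc1] at hA1 hA2
    rw [← hc2] at hA1' hA2'
    -- quadratic identities
    have hq1 : ‖c1‖ ^ 2 = t * ‖yν‖ ^ 2 + (1 - t) * ‖yμ‖ ^ 2 - t * (1 - t) * D ^ 2 := by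
      rw [hc1, norm_combo_sq, hD, norm_sub_rev]
    have hq2 : ‖c2‖ ^ 2 = t * ‖yμ‖ ^ 2 + (1 - t) * ‖yν‖ ^ 2 - t * (1 - t) * D ^ 2 := by
      rw [hc2, norm_combo_sq, hD]
    have hq1x : ‖c1 - x‖ ^ 2
        = t * ‖yν - x‖ ^ 2 + (1 - t) * ‖yμ - x‖ ^ 2 - t * (1 - t) * D ^ 2 := by
      have h1 : c1 - x = t • (yν - x) + (1 - t) • (yμ - x) := by rw [hc1]; module
      rw [h1, norm_combo_sq]
      have h2 : (yν - x) - (yμ - x) = -(yμ - yν) := by module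
      rw [h2, norm_neg, hD]
    have hq2x : ‖c2 - x‖ ^ 2
        = t * ‖yμ - x‖ ^ 2 + (1 - t) * ‖yν - x‖ ^ 2 - t * (1 - t) * D ^ 2 := by
      have h1 : c2 - x = t • (yμ - x) + (1 - t) • (yν - x) := by rw [hc2]; module
      rw [h1, norm_combo_sq]
      have h2 : (yμ - x) - (yν - x) = yμ - yν := by module
      rw [h2, hD]
    -- minimality
    have hmin1 := hyμ c1
    have hmin2 := hyν c2
    rw [hq1x] at hmin1
    rw [hq2x] at hmin2
    rw [hq1] at hA1
    rw [hq2] at hA1'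
    -- mean value at c2 vs yν
    have hc2y : ‖c2 - yν‖ = t * D := by
      have h1 : c2 - yν = t • (yμ - yν) := by rw [hc2]; module
      rw [h1, norm_smul, Real.norm_eq_abs, abs_of_pos ht0, hD]
    have hmv2 := hmv c2 yν
    rw [hc2y] at hmv2
    have hmv2' := (abs_le.mp hmv2).1
    -- inequality A :  (α + 1/η)/2 * (t*(1-t)*D^2) ≤ t * (Φ(yν) - Φ(yμ))  [for measure μ]
    -- inequality B :  t * (Φ(yν) - Φ(yμ)) ≤ β*W*t*D - (α + 1/η)/2 * (t*(1-t)*D^2)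
    have hstep : t * ((α + 2 * (1 / (2 * η))) * (1 - t) * D ^ 2) ≤ t * (β * W * D) := by
      linarith [hmin1, hmin2, hA1, hA1', hA2, hA2', hmv2']
    have heq : α + 2 * (1 / (2 * η)) = α + 1/η := by
      field_simp
    rw [heq] at hstep
    exact le_of_mul_le_mul_left hstep ht0
  -- Step 4: take t → 0
  have hlim : (α + 1/η) * D ^ 2 ≤ β * W * D := by
    have hcont : Filter.Tendsto (fun t : ℝ => (α + 1/η) * (1 - t) * D ^ 2)
        (nhdsWithin 0 (Ioi 0)) (nhds ((α + 1/η) * (1 - 0) * D ^ 2)) := by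
      apply Filter.Tendsto.mono_left _ nhdsWithin_le_nhds
      exact (Continuous.tendsto (by continuity) 0)
    have hev : ∀ᶠ t in nhdsWithin (0:ℝ) (Ioi 0),
        (α + 1/η) * (1 - t) * D ^ 2 ≤ β * W * D :=
      Filter.eventually_of_mem (Ioo_mem_nhdsGT_of_mem ⟨le_refl 0, one_pos⟩) key
    have := le_of_tendsto hcont hev
    simpa using this
  -- Step 5: conclude
  have hpos : 0 < α + 1/η := by positivity
  rcases eq_or_lt_of_le hDnn with hD0 | hD0
  · rw [← hD0]
    positivity
  · have h1 : (α + 1/η) * D ≤ β * W := by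
      have := hlim
      nlinarith
    have h2 : η * β / (1 + η * α) * W = β * W / (α + 1/η) := by
      have hηne : η ≠ 0 := ne_of_gt hη
      have hne : (1 + η * α) ≠ 0 := by positivity
      field_simp
      ring
    show D ≤ η * β / (1 + η * α) * W
    rw [h2, le_div_iff₀ hpos]
    nlinarith [h1]
end
end

section
/- (Contraction of repeated minimization toward equilibrium) Suppose f_{x̄} is α-strongly convex for some α > 0. Then for every x ∈ E and every minimizer x⁺ over E of y ↦ f_x(y) + r(y), one has ‖x⁺ − x̄‖ ≤ (γβ/α)·‖x − x̄‖. In particular, in the regime ρ := γβ/α < 1 the repeated minimization update is a contraction toward the equilibrium point x̄. -/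
open MeasureTheory Set Filter

noncomputable section

local notation "⟪" x ", " y "⟫" => @inner ℝ _ _ x y

section AuxRMC

variable {E : Type*} [NormedAddCommGroup E] [InnerProductSpace ℝ E] [CompleteSpace E]

private lemma aux_deriv_le_slope {ψ : ℝ → ℝ} {d c : ℝ} (hd : HasDerivAt ψ d 0)
    (h : ∀ t ∈ Set.Ioc (0:ℝ) 1, (ψ t - ψ 0) / t ≤ c) : d ≤ c := by
  have ht : Tendsto (slope ψ 0) (nhdsWithin 0 (Set.Ioi 0)) (nhds d) :=
    (hasDerivAt_iff_tendsto_slope.1 hd).mono_left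
      (nhdsWithin_mono _ (fun t htm => ne_of_gt htm))
  refine le_of_tendsto ht ?_
  filter_upwards [Ioc_mem_nhdsGT (one_pos : (0:ℝ) < 1)] with t htm
  have := h t htm
  simpa [slope_def_field, sub_zero] using this

private lemma aux_slope_le_deriv {ψ : ℝ → ℝ} {d c : ℝ} (hd : HasDerivAt ψ d 0)
    (h : ∀ t ∈ Set.Ioc (0:ℝ) 1, c ≤ (ψ t - ψ 0) / t) : c ≤ d := by
  have := aux_deriv_le_slope (c := -c) hd.neg ?_
  · linarith
  · intro t htm
    have := h t htm
    have h2 : (-ψ t - -ψ 0) / t = -((ψ t - ψ 0)/t) := by ring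
    rw [Pi.neg_apply, Pi.neg_apply, h2]; linarith

private lemma aux_line_deriv {g : E → ℝ} {Gp p : E} (hg : HasGradientAt g Gp p) (d : E) :
    HasDerivAt (fun t : ℝ => g (p + t • d)) ⟪Gp, d⟫ 0 := by
  have hline : HasDerivAt (fun t : ℝ => p + t • d) d 0 := by
    simpa using ((hasDerivAt_id (0:ℝ)).smul_const d).const_add p
  have hf : HasFDerivAt g (InnerProductSpace.toDual ℝ E Gp) ((fun t : ℝ => p + t • d) 0) := by
    simpa using hg.hasFDerivAt
  have := hf.comp_hasDerivAt 0 hline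
  simp at this
  exact this

/-- convex first-order inequality -/
private lemma aux_convex_grad {g : E → ℝ} (hg : ConvexOn ℝ univ g) {Gp p : E}
    (h : HasGradientAt g Gp p) (y : E) : ⟪Gp, y - p⟫ ≤ g y - g p := by
  refine aux_deriv_le_slope (aux_line_deriv h (y - p)) ?_
  intro t htm
  rw [div_le_iff₀ htm.1]
  have hpt : p + t • (y - p) = (1 - t) • p + t • y := by
    module
  have h2 := hg.2 (mem_univ p) (mem_univ y) (by linarith [htm.2] : (0:ℝ) ≤ 1 - t)
    htm.1.le (by ring)
  simp only [zero_smul, add_zero, hpt, smul_eq_mul] at h2 ⊢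
  nlinarith

/-- gradient monotonicity for convex functions -/
private lemma aux_monotone {g : E → ℝ} (hg : ConvexOn ℝ univ g) {Ga Gb a b : E}
    (ha : HasGradientAt g Ga a) (hb : HasGradientAt g Gb b) : 0 ≤ ⟪Ga - Gb, a - b⟫ := by
  have h1 := aux_convex_grad hg ha b
  have h2 := aux_convex_grad hg hb a
  have hsum : ⟪Ga, b - a⟫ + ⟪Gb, a - b⟫ ≤ 0 := by linarith
  have e : ⟪Ga - Gb, a - b⟫ = -(⟪Ga, b - a⟫ + ⟪Gb, a - b⟫) := by
    simp only [inner_sub_left, inner_sub_right]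
    ring
  rw [e]; linarith

/-- first-order optimality for a minimizer of `g + r` with `r` convex -/
private lemma aux_opt {g r : E → ℝ} {Gp p : E} (hg : HasGradientAt g Gp p)
    (hr : ConvexOn ℝ univ r) (hmin : ∀ v, g p + r p ≤ g v + r v) (y : E) :
    -(r y - r p) ≤ ⟪Gp, y - p⟫ := by
  refine aux_slope_le_deriv (aux_line_deriv hg (y - p)) ?_
  intro t htm
  rw [le_div_iff₀ htm.1]
  have hpt : p + t • (y - p) = (1 - t) • p + t • y := by
    module
  have h1 := hmin (p + t • (y - p))
  have h2 := hr.2 (mem_univ p) (mem_univ y) (by linarith [htm.2] : (0:ℝ) ≤ 1 - t)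
    htm.1.le (by ring)
  rw [hpt] at h1
  simp only [zero_smul, add_zero, hpt, smul_eq_mul] at h1 h2 ⊢
  nlinarith

/-- gradient of α/2 ‖·‖² -/
private lemma aux_sq_grad (α : ℝ) (y : E) :
    HasGradientAt (fun v : E => α / 2 * ‖v‖ ^ 2) (α • y) y := by
  have h1 : HasFDerivAt (fun v : E => ⟪v, v⟫)
      ((fderivInnerCLM ℝ (y, y)).comp ((ContinuousLinearMap.id ℝ E).prod
        (ContinuousLinearMap.id ℝ E))) y :=
    (hasFDerivAt_id y).inner ℝ (hasFDerivAt_id y)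
  have h2 : HasFDerivAt (fun v : E => α / 2 * ⟪v, v⟫)
      ((α / 2) • ((fderivInnerCLM ℝ (y, y)).comp ((ContinuousLinearMap.id ℝ E).prod
        (ContinuousLinearMap.id ℝ E)))) y := h1.const_mul (α / 2)
  rw [hasGradientAt_iff_hasFDerivAt]
  have heq : (fun v : E => α / 2 * ‖v‖ ^ 2) = fun v : E => α / 2 * ⟪v, v⟫ := by
    funext v; rw [real_inner_self_eq_norm_sq]
  rw [heq]
  refine h2.congr_fderiv ?_
  ext v
  simp [fderivInnerCLM_apply, real_inner_comm, InnerProductSpace.toDual_apply_apply,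
    real_inner_smul_left]
  ring

private lemma aux_grad_sub {g h : E → ℝ} {a b x : E} (hg : HasGradientAt g a x)
    (hh : HasGradientAt h b x) : HasGradientAt (fun y => g y - h y) (a - b) x := by
  rw [hasGradientAt_iff_hasFDerivAt] at *
  refine (hg.sub hh).congr_fderiv ?_
  ext v
  simp [inner_sub_left]

end AuxRMC

/-- **Contraction of repeated minimization toward equilibrium.** If `f_{xbar}` is `α`-strongly
convex, then any minimizer `xp` of `f_x + r` satisfies `‖xp − xbar‖ ≤ (γβ/α)‖x − xbar‖`. -/
theorem repeated_minimization_contraction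
    {E : Type*} [NormedAddCommGroup E] [InnerProductSpace ℝ E] [FiniteDimensional ℝ E]
    {Z : Type*} [MetricSpace Z] [MeasurableSpace Z] [BorelSpace Z]
    (ℓ : E → Z → ℝ) (G : E → Z → E) (β γ : ℝ) (hβ : 0 ≤ β) (hγ : 0 ≤ γ)
    (hgrad : ∀ (x : E) (z : Z), HasGradientAt (fun x' => ℓ x' z) (G x z) x)
    (hlip : ∀ (x : E) (z z' : Z), ‖G x z - G x z'‖ ≤ β * dist z z')
    (D : E → Measure Z) (hD : ∀ x : E, IsProbabilityMeasure (D x))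
    (hint : ∀ x y : E, Integrable (fun z => ℓ y z) (D x))
    (hintG : ∀ x y : E, Integrable (fun z => G y z) (D x))
    (f : E → E → ℝ) (Gf : E → E → E)
    (hfdef : ∀ x y : E, f x y = ∫ z, ℓ y z ∂(D x))
    (hGfdef : ∀ x y : E, Gf x y = ∫ z, G y z ∂(D x))
    (hfgrad : ∀ x y : E, HasGradientAt (f x) (Gf x y) y)
    (hDlip : ∀ x y : E, ∀ g : Z → ℝ, LipschitzWith 1 g →
      |(∫ z, g z ∂(D x)) - ∫ z, g z ∂(D y)| ≤ γ * ‖x - y‖)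
    (r : E → ℝ) (hr : ConvexOn ℝ univ r)
    (xbar : E) (hxbar : ∀ y : E, f xbar xbar + r xbar ≤ f xbar y + r y)
    (α : ℝ) (hα : 0 < α)
    (hsc : ConvexOn ℝ univ (fun y => f xbar y - α / 2 * ‖y‖ ^ 2))
    (x xp : E) (hxp : ∀ y : E, f x xp + r xp ≤ f x y + r y) :
    ‖xp - xbar‖ ≤ (γ * β / α) * ‖x - xbar‖ := by
  set u : E := xp - xbar with hu
  -- strong monotonicity of the gradient of f xbar
  have hm1 : HasGradientAt (fun y => f xbar y - α / 2 * ‖y‖ ^ 2) (Gf xbar xp - α • xp) xp :=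
    aux_grad_sub (hfgrad xbar xp) (aux_sq_grad α xp)
  have hm2 : HasGradientAt (fun y => f xbar y - α / 2 * ‖y‖ ^ 2) (Gf xbar xbar - α • xbar) xbar :=
    aux_grad_sub (hfgrad xbar xbar) (aux_sq_grad α xbar)
  have key1 : α * ‖u‖ ^ 2 ≤ ⟪Gf xbar xp - Gf xbar xbar, u⟫ := by
    have h0 := aux_monotone hsc hm1 hm2
    have e : (Gf xbar xp - α • xp) - (Gf xbar xbar - α • xbar)
        = (Gf xbar xp - Gf xbar xbar) - α • u := by rw [hu]; module
    rw [← hu, e, inner_sub_left, real_inner_smul_left,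
      real_inner_self_eq_norm_sq] at h0
    linarith
  -- first-order optimality conditions
  have h1 := aux_opt (hfgrad x xp) hr hxp xbar
  have h2 := aux_opt (hfgrad xbar xbar) hr hxbar xp
  have key2 : ⟪Gf xbar xp - Gf xbar xbar, u⟫ ≤ ⟪Gf xbar xp - Gf x xp, u⟫ := by
    have e1 : ⟪Gf x xp, xbar - xp⟫ = -⟪Gf x xp, u⟫ := by
      rw [show xbar - xp = -(xp - xbar) from by abel, inner_neg_right]
    rw [e1] at h1
    rw [← hu] at h2
    rw [inner_sub_left, inner_sub_left]
    linarith
  -- Kantorovich-Rubinstein step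
  have hw : ∀ w : E, ⟪(∫ z, G xp z ∂(D w)), u⟫ = ∫ z, ⟪G xp z, u⟫ ∂(D w) := by
    intro w
    rw [real_inner_comm, ← integral_inner (hintG w xp) u]
    exact integral_congr_ae (.of_forall fun z => real_inner_comm _ _)
  set A : ℝ := ∫ z, ⟪G xp z, u⟫ ∂(D xbar) with hA
  set B : ℝ := ∫ z, ⟪G xp z, u⟫ ∂(D x) with hB
  set N : ℝ := γ * ‖xbar - x‖ with hN
  have hNnn : 0 ≤ N := mul_nonneg hγ (norm_nonneg _)
  have hIeq : ⟪Gf xbar xp - Gf x xp, u⟫ = A - B := by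
    rw [inner_sub_left, hGfdef, hGfdef, hw xbar, hw x]
  have hstep : ∀ ε : ℝ, 0 < ε → A - B ≤ (β * ‖u‖ + ε) * N := by
    intro ε hε
    set c : ℝ := β * ‖u‖ + ε with hc
    have hcpos : 0 < c := by positivity
    have hble : β * ‖u‖ ≤ c := by rw [hc]; linarith
    set φg : Z → ℝ := fun z => c⁻¹ * ⟪G xp z, u⟫ with hφg
    have hLip : LipschitzWith 1 φg := by
      refine LipschitzWith.of_dist_le_mul fun z z' => ?_
      rw [NNReal.coe_one, Real.dist_eq]
      have e : φg z - φg z' = c⁻¹ * ⟪G xp z - G xp z', u⟫ := by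
        simp only [hφg, inner_sub_left]; ring
      rw [e, abs_mul, abs_inv, abs_of_pos hcpos]
      have hb := abs_real_inner_le_norm (G xp z - G xp z') u
      have hl := hlip xp z z'
      have hle : |⟪G xp z - G xp z', u⟫| ≤ β * ‖u‖ * dist z z' := calc
        |⟪G xp z - G xp z', u⟫| ≤ ‖G xp z - G xp z'‖ * ‖u‖ := hb
        _ ≤ (β * dist z z') * ‖u‖ := mul_le_mul_of_nonneg_right hl (norm_nonneg u)
        _ = β * ‖u‖ * dist z z' := by ring
      have hfrac : β * ‖u‖ / c ≤ 1 := (div_le_one hcpos).2 hble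
      calc c⁻¹ * |⟪G xp z - G xp z', u⟫| ≤ c⁻¹ * (β * ‖u‖ * dist z z') := by
            exact mul_le_mul_of_nonneg_left hle (inv_nonneg.2 hcpos.le)
        _ = (β * ‖u‖ / c) * dist z z' := by ring
        _ ≤ 1 * dist z z' := mul_le_mul_of_nonneg_right hfrac dist_nonneg
    have hD' := hDlip xbar x φg hLip
    have hint1 : ∀ w : E, Integrable (fun z => ⟪G xp z, u⟫) (D w) := fun w =>
      (hintG w xp).inner_const u
    have hInt : ∀ w : E, ∫ z, φg z ∂(D w) = c⁻¹ * ∫ z, ⟪G xp z, u⟫ ∂(D w) := by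
      intro w
      simp only [hφg]
      exact integral_const_mul c⁻¹ _
    rw [hInt xbar, hInt x, ← hA, ← hB, ← hN, ← mul_sub] at hD'
    have habs : c⁻¹ * (A - B) ≤ N := by
      rw [abs_mul, abs_inv, abs_of_pos hcpos] at hD'
      calc c⁻¹ * (A - B) ≤ c⁻¹ * |A - B| :=
            mul_le_mul_of_nonneg_left (le_abs_self _) (inv_nonneg.2 hcpos.le)
        _ ≤ N := hD'
    have := mul_le_mul_of_nonneg_left habs hcpos.le
    rw [← mul_assoc, mul_inv_cancel₀ hcpos.ne', one_mul] at this
    linarith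
  have hKR : A - B ≤ β * ‖u‖ * N := by
    refine le_of_forall_pos_le_add fun ε hε => ?_
    have hN1 : (0:ℝ) < N + 1 := by linarith
    have hs := hstep (ε / (N + 1)) (by positivity)
    have h2 : (ε / (N + 1)) * N ≤ ε := by
      rw [div_mul_eq_mul_div, div_le_iff₀ hN1]; nlinarith
    nlinarith
  -- combine
  have hfinal : α * ‖u‖ ^ 2 ≤ β * ‖u‖ * (γ * ‖x - xbar‖) := by
    have h3 : α * ‖u‖ ^ 2 ≤ A - B := hIeq ▸ (key1.trans key2)
    have h4 := h3.trans hKR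
    rwa [hN, show ‖xbar - x‖ = ‖x - xbar‖ from norm_sub_rev _ _] at h4
  rcases eq_or_lt_of_le (norm_nonneg u) with hzero | hpos
  · rw [← hzero]
    exact mul_nonneg (div_nonneg (mul_nonneg hγ hβ) hα.le) (norm_nonneg _)
  · rw [div_mul_eq_mul_div, le_div_iff₀ hα]
    nlinarith
end
end

section
/- (Reduction to online convex optimization) Suppose f_{x̄} is α-strongly convex, set ρ := γβ/α, and assume ρ < 1/2. Let (Ω, P) be a probability space, let x_1, …, x_t : Ω → E be random vectors (with all quantities below integrable), and suppose the expected regret bound E[Σ_{i=1}^t (f_{x_i}(x_i) + r(x_i) − f_{x_i}(x̄) − r(x̄))] ≤ U_t holds for a constant U_t. Then the average iterate x̂_t := (1/t)Σ_{i=1}^t x_i satisfies E[φ(x̂_t)] − φ(x̄) ≤ U_t/((1 − 2ρ)·t). -/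
open MeasureTheory Set

noncomputable section

/-- Quadratic growth of a strongly convex function at a minimizer. -/
lemma aux_quad_growth {E : Type*} [NormedAddCommGroup E] [NormedSpace ℝ E]
    {ψ : E → ℝ} {α : ℝ} (hsc : StrongConvexOn univ α ψ)
    {xbar : E} (hmin : ∀ y : E, ψ xbar ≤ ψ y) (y : E) :
    α / 2 * ‖y - xbar‖ ^ 2 ≤ ψ y - ψ xbar := by
  refine le_of_forall_pos_le_add fun ε hε => ?_
  rcases le_or_gt (α / 2 * ‖y - xbar‖ ^ 2) 0 with h0 | h0
  · have := hmin y; linarith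
  set l : ℝ := min (1 / 2) (ε / (α / 2 * ‖y - xbar‖ ^ 2 + 1)) with hl
  have hl0 : 0 < l := lt_min (by norm_num) (by positivity)
  have hl1 : l ≤ 1 / 2 := min_le_left _ _
  have hlc : l * (α / 2 * ‖y - xbar‖ ^ 2) ≤ ε := by
    have h1 : l ≤ ε / (α / 2 * ‖y - xbar‖ ^ 2 + 1) := min_le_right _ _
    have h2 := mul_le_mul_of_nonneg_right h1 h0.le
    refine h2.trans ?_
    rw [div_mul_eq_mul_div, div_le_iff₀ (by positivity)]
    nlinarith
  have huc := hsc.2 (mem_univ y) (mem_univ xbar) hl0.le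
    (by linarith : (0:ℝ) ≤ 1 - l) (by ring)
  have hm := hmin (l • y + (1 - l) • xbar)
  simp only [smul_eq_mul] at huc
  have hdiv : l * ((1 - l) * (α / 2 * ‖y - xbar‖ ^ 2)) ≤ l * (ψ y - ψ xbar) := by
    nlinarith [huc, hm]
  have h3 : (1 - l) * (α / 2 * ‖y - xbar‖ ^ 2) ≤ ψ y - ψ xbar :=
    le_of_mul_le_mul_left hdiv hl0
  nlinarith [h3, hlc]

/-- **Reduction to online convex optimization.** If `f_{x̄}` is `α`-strongly convex,
`ρ := γβ/α < 1/2`, and the expected regret against `x̄` is bounded by `U`, then the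
average iterate `x̂_t = (1/t)Σᵢ xᵢ` satisfies `E[φ(x̂_t)] − φ(x̄) ≤ U/((1 − 2ρ)t)`. -/
theorem reduction_to_online
    {E : Type*} [NormedAddCommGroup E] [InnerProductSpace ℝ E] [FiniteDimensional ℝ E]
    {Z : Type*} [MetricSpace Z] [MeasurableSpace Z] [BorelSpace Z]
    (ℓ : E → Z → ℝ) (G : E → Z → E) (β γ : ℝ) (hβ : 0 ≤ β) (hγ : 0 ≤ γ)
    (hgrad : ∀ (x : E) (z : Z), HasGradientAt (fun x' => ℓ x' z) (G x z) x)
    (hlip : ∀ (x : E) (z z' : Z), ‖G x z - G x z'‖ ≤ β * dist z z')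
    (D : E → Measure Z) (hD : ∀ x : E, IsProbabilityMeasure (D x))
    (hint : ∀ x y : E, Integrable (fun z => ℓ y z) (D x))
    (hintG : ∀ x y : E, Integrable (fun z => G y z) (D x))
    (f : E → E → ℝ) (Gf : E → E → E)
    (hfdef : ∀ x y : E, f x y = ∫ z, ℓ y z ∂(D x))
    (hGfdef : ∀ x y : E, Gf x y = ∫ z, G y z ∂(D x))
    (hfgrad : ∀ x y : E, HasGradientAt (f x) (Gf x y) y)
    (hDlip : ∀ x y : E, ∀ g : Z → ℝ, LipschitzWith 1 g →
      |(∫ z, g z ∂(D x)) - ∫ z, g z ∂(D y)| ≤ γ * ‖x - y‖)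
    (r : E → ℝ) (hr : ConvexOn ℝ univ r)
    (xbar : E) (hxbar : ∀ y : E, f xbar xbar + r xbar ≤ f xbar y + r y)
    (α : ℝ) (hα : 0 < α)
    (hsc : ConvexOn ℝ univ (fun y => f xbar y - α / 2 * ‖y‖ ^ 2))
    (hρ : γ * β / α < 1 / 2)
    {Ω : Type*} [MeasurableSpace Ω] (P : Measure Ω) [IsProbabilityMeasure P]
    (t : ℕ) (ht : 0 < t) (x : Fin t → Ω → E)
    (U : ℝ)
    (hregret_int : Integrable (fun ω =>
      ∑ i : Fin t, (f (x i ω) (x i ω) + r (x i ω) - f (x i ω) xbar - r xbar)) P)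
    (hregret : (∫ ω, (∑ i : Fin t,
        (f (x i ω) (x i ω) + r (x i ω) - f (x i ω) xbar - r xbar)) ∂P) ≤ U)
    (havg_int : Integrable (fun ω =>
      f xbar ((t : ℝ)⁻¹ • ∑ i : Fin t, x i ω) + r ((t : ℝ)⁻¹ • ∑ i : Fin t, x i ω)) P) :
    (∫ ω, (f xbar ((t : ℝ)⁻¹ • ∑ i : Fin t, x i ω)
        + r ((t : ℝ)⁻¹ • ∑ i : Fin t, x i ω)) ∂P) - (f xbar xbar + r xbar)
      ≤ U / ((1 - 2 * (γ * β / α)) * t) := by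
  classical
  have hαne : (α : ℝ) ≠ 0 := ne_of_gt hα
  set ρ : ℝ := γ * β / α with hρdef
  have hρ0 : 0 ≤ ρ := by positivity
  have h2ρ : 0 < 1 - 2 * ρ := by linarith
  have htR : (0 : ℝ) < t := by exact_mod_cast ht
  set φ : E → ℝ := fun y => f xbar y + r y with hφdef
  -- strong convexity of f xbar and of φ
  have hfsc : StrongConvexOn univ α (f xbar) := strongConvexOn_iff_convex.mpr hsc
  have hφscv : StrongConvexOn univ α φ := by
    have h := hfsc.add hr.uniformConvexOn_zero
    simpa [StrongConvexOn, hφdef, Pi.add_def] using h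
  have hfconv : ConvexOn ℝ univ (f xbar) := hfsc.convexOn fun s => by positivity
  have hφconv : ConvexOn ℝ univ φ := hfconv.add hr
  have hxbarφ : ∀ y : E, φ xbar ≤ φ y := fun y => hxbar y
  -- Step 1: quadratic growth at the minimizer
  have key1 : ∀ y : E, α / 2 * ‖y - xbar‖ ^ 2 ≤ φ y - φ xbar :=
    aux_quad_growth hφscv hxbarφ
  -- difference of integrals under D x'
  have hgdiff : ∀ x' y : E, ∫ z, (ℓ y z - ℓ xbar z) ∂(D x') = f x' y - f x' xbar := by
    intro x' y
    rw [integral_sub (hint x' y) (hint x' xbar), hfdef, hfdef]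
  -- Lipschitz bound on z ↦ ℓ y z - ℓ xbar z
  have hlipg : ∀ (y : E) (z z' : Z),
      |(ℓ y z - ℓ xbar z) - (ℓ y z' - ℓ xbar z')| ≤ β * ‖y - xbar‖ * dist z z' := by
    intro y z z'
    have hmv : ‖(fun x' => ℓ x' z - ℓ x' z') y - (fun x' => ℓ x' z - ℓ x' z') xbar‖
        ≤ (β * dist z z') * ‖y - xbar‖ := by
      refine convex_univ.norm_image_sub_le_of_norm_hasFDerivWithin_le
        (f' := fun x' => (InnerProductSpace.toDual ℝ E) (G x' z) -
          (InnerProductSpace.toDual ℝ E) (G x' z'))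
        (fun x' _ => (((hgrad x' z).hasFDerivAt.sub
          (hgrad x' z').hasFDerivAt)).hasFDerivWithinAt)
        (fun x' _ => ?_) (mem_univ xbar) (mem_univ y)
      show ‖(InnerProductSpace.toDual ℝ E) (G x' z) -
        (InnerProductSpace.toDual ℝ E) (G x' z')‖ ≤ β * dist z z'
      rw [← map_sub, (InnerProductSpace.toDual ℝ E).norm_map]
      exact hlip x' z z'
    simp only [Real.norm_eq_abs] at hmv
    have heq : (ℓ y z - ℓ xbar z) - (ℓ y z' - ℓ xbar z')
        = (ℓ y z - ℓ y z') - (ℓ xbar z - ℓ xbar z') := by ring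
    rw [heq]
    calc |(ℓ y z - ℓ y z') - (ℓ xbar z - ℓ xbar z')| ≤ (β * dist z z') * ‖y - xbar‖ := hmv
      _ = β * ‖y - xbar‖ * dist z z' := by ring
  -- Step 2: Kantorovich-Rubinstein transfer
  have hKR : ∀ y : E, |(f y y - f y xbar) - (f xbar y - f xbar xbar)|
      ≤ γ * β * ‖y - xbar‖ ^ 2 := by
    intro y
    refine le_of_forall_pos_le_add fun ε' hε' => ?_
    set c : ℝ := β * ‖y - xbar‖ with hc
    have hc0 : 0 ≤ c := by positivity
    set ε : ℝ := ε' / (γ * ‖y - xbar‖ + 1) with hεdef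
    have hε0 : 0 < ε := by positivity
    have hce : 0 < c + ε := by linarith
    have hglip : LipschitzWith 1 (fun z => (c + ε)⁻¹ * (ℓ y z - ℓ xbar z)) := by
      refine LipschitzWith.of_dist_le_mul fun z z' => ?_
      rw [NNReal.coe_one, one_mul, Real.dist_eq]
      have h1 : (c + ε)⁻¹ * (ℓ y z - ℓ xbar z) - (c + ε)⁻¹ * (ℓ y z' - ℓ xbar z')
          = (c + ε)⁻¹ * ((ℓ y z - ℓ xbar z) - (ℓ y z' - ℓ xbar z')) := by ring
      rw [h1, abs_mul, abs_of_nonneg (by positivity : (0:ℝ) ≤ (c + ε)⁻¹)]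
      have h3 : (c + ε)⁻¹ * |(ℓ y z - ℓ xbar z) - (ℓ y z' - ℓ xbar z')|
          ≤ (c + ε)⁻¹ * (c * dist z z') :=
        mul_le_mul_of_nonneg_left (hlipg y z z') (by positivity)
      refine h3.trans ?_
      have hk : (c + ε)⁻¹ * (c + ε) = 1 := inv_mul_cancel₀ (ne_of_gt hce)
      have hd : (0:ℝ) ≤ dist z z' := dist_nonneg
      nlinarith [mul_nonneg (inv_nonneg.2 hce.le) hd]
    have hDl := hDlip y xbar _ hglip
    have h2 : ∀ x' : E, (∫ z, (c + ε)⁻¹ * (ℓ y z - ℓ xbar z) ∂(D x'))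
        = (c + ε)⁻¹ * (f x' y - f x' xbar) := by
      intro x'
      rw [integral_const_mul, hgdiff]
    rw [h2 y, h2 xbar, ← mul_sub, abs_mul,
      abs_of_nonneg (inv_nonneg.2 hce.le)] at hDl
    have hA : |(f y y - f y xbar) - (f xbar y - f xbar xbar)|
        ≤ (c + ε) * (γ * ‖y - xbar‖) := (inv_mul_le_iff₀ hce).mp hDl
    have hεle : ε * (γ * ‖y - xbar‖) ≤ ε' := by
      rw [hεdef, div_mul_eq_mul_div, div_le_iff₀ (by positivity)]
      nlinarith [norm_nonneg (y - xbar), hε'.le]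
    have hcg : c * (γ * ‖y - xbar‖) = γ * β * ‖y - xbar‖ ^ 2 := by
      rw [hc]; ring
    nlinarith [hA, hεle, hcg]
  have key2 : ∀ y : E, f xbar y - f xbar xbar - γ * β * ‖y - xbar‖ ^ 2
      ≤ f y y - f y xbar := by
    intro y
    have h1 := hKR y
    have h2 := neg_abs_le ((f y y - f y xbar) - (f xbar y - f xbar xbar))
    linarith
  -- Step 3: pointwise regret bound
  have key3 : ∀ y : E, (1 - 2 * ρ) * (φ y - φ xbar)
      ≤ f y y + r y - f y xbar - r xbar := by
    intro y
    have h1 := key1 y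
    have h2 := key2 y
    have hΔ0 : 0 ≤ φ y - φ xbar := by linarith [hxbarφ y]
    have h3 : γ * β * ‖y - xbar‖ ^ 2 ≤ 2 * ρ * (φ y - φ xbar) := by
      have h4 := mul_le_mul_of_nonneg_left h1
        (show (0:ℝ) ≤ γ * β * (2 / α) by positivity)
      calc γ * β * ‖y - xbar‖ ^ 2
          = γ * β * (2 / α) * (α / 2 * ‖y - xbar‖ ^ 2) := by field_simp
        _ ≤ γ * β * (2 / α) * (φ y - φ xbar) := h4
        _ = 2 * ρ * (φ y - φ xbar) := by rw [hρdef]; ring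
    have hφy : φ y - φ xbar = (f xbar y - f xbar xbar) + (r y - r xbar) := by
      simp only [hφdef]; ring
    linarith
  -- Step 4: pointwise averaged bound via Jensen
  have key4 : ∀ ω : Ω, (1 - 2 * ρ) * (φ ((t : ℝ)⁻¹ • ∑ i : Fin t, x i ω) - φ xbar)
      ≤ (t : ℝ)⁻¹ * ∑ i : Fin t,
        (f (x i ω) (x i ω) + r (x i ω) - f (x i ω) xbar - r xbar) := by
    intro ω
    have hw : ∑ _i : Fin t, (t : ℝ)⁻¹ = 1 := by
      rw [Finset.sum_const, Finset.card_univ, Fintype.card_fin, nsmul_eq_mul,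
        mul_inv_cancel₀ (ne_of_gt htR)]
    have hjensen : φ ((t : ℝ)⁻¹ • ∑ i : Fin t, x i ω)
        ≤ ∑ i : Fin t, (t : ℝ)⁻¹ * φ (x i ω) := by
      have hj := hφconv.map_sum_le (t := Finset.univ) (w := fun _ : Fin t => (t : ℝ)⁻¹)
        (p := fun i => x i ω) (fun i _ => by positivity) hw (fun i _ => mem_univ _)
      rwa [← Finset.smul_sum] at hj
    have hsum : (t : ℝ)⁻¹ * ∑ i : Fin t, (φ (x i ω) - φ xbar)
        = (∑ i : Fin t, (t : ℝ)⁻¹ * φ (x i ω)) - φ xbar := by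
      rw [Finset.sum_sub_distrib, Finset.sum_const, Finset.card_univ, Fintype.card_fin,
        nsmul_eq_mul, mul_sub, Finset.mul_sum, ← mul_assoc,
        inv_mul_cancel₀ (ne_of_gt htR), one_mul]
    calc (1 - 2 * ρ) * (φ ((t : ℝ)⁻¹ • ∑ i : Fin t, x i ω) - φ xbar)
        ≤ (1 - 2 * ρ) * ((t : ℝ)⁻¹ * ∑ i : Fin t, (φ (x i ω) - φ xbar)) := by
          apply mul_le_mul_of_nonneg_left _ h2ρ.le
          rw [hsum]; linarith [hjensen]
      _ = (t : ℝ)⁻¹ * ∑ i : Fin t, (1 - 2 * ρ) * (φ (x i ω) - φ xbar) := by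
          simp only [Finset.mul_sum]
          exact Finset.sum_congr rfl fun i _ => by ring
      _ ≤ (t : ℝ)⁻¹ * ∑ i : Fin t,
            (f (x i ω) (x i ω) + r (x i ω) - f (x i ω) xbar - r xbar) := by
          apply mul_le_mul_of_nonneg_left _ (inv_nonneg.2 htR.le)
          exact Finset.sum_le_sum fun i _ => key3 (x i ω)
  -- Step 5: integrate
  have hLint : Integrable
      (fun ω => (1 - 2 * ρ) * (φ ((t : ℝ)⁻¹ • ∑ i : Fin t, x i ω) - φ xbar)) P :=
    (havg_int.sub (integrable_const _)).const_mul _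
  have hRint : Integrable (fun ω => (t : ℝ)⁻¹ * ∑ i : Fin t,
      (f (x i ω) (x i ω) + r (x i ω) - f (x i ω) xbar - r xbar)) P :=
    hregret_int.const_mul _
  have hImono := integral_mono hLint hRint key4
  simp only [hφdef] at hImono
  rw [integral_const_mul, integral_const_mul,
    integral_sub havg_int (integrable_const _), integral_const, probReal_univ,
    one_smul] at hImono
  have hfin : (1 - 2 * ρ) * ((∫ ω, (f xbar ((t : ℝ)⁻¹ • ∑ i : Fin t, x i ω)
      + r ((t : ℝ)⁻¹ • ∑ i : Fin t, x i ω)) ∂P) - (f xbar xbar + r xbar)) ≤ (t : ℝ)⁻¹ * U := by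
    refine hImono.trans ?_
    exact mul_le_mul_of_nonneg_left hregret (inv_nonneg.2 htR.le)
  rw [le_div_iff₀ (by positivity : (0:ℝ) < (1 - 2 * ρ) * t)]
  have h5 := mul_le_mul_of_nonneg_left hfin htR.le
  have h6 : (t:ℝ) * ((t:ℝ)⁻¹ * U) = U := by field_simp
  rw [h6] at h5
  nlinarith [h5]
end
end

section
/- (Strong convexity of the objective induced by stochastic models) Let (Ω, P) be a probability space, f : E → ℝ differentiable, r : E → ℝ convex, and for each x ∈ E let m_x : Ω → (E → ℝ) be a random model such that: (a) for almost every ω, m_x(ω) is convex and m_x(ω) + r is α₁-strongly convex; (b) for almost every ω, m_x(ω) is differentiable at x, and E[∇m_x(·)(x)] = ∇f(x); (c) for all x, y ∈ E, E[m_x(·)(x) − m_x(·)(y)] ≥ f(x) − f(y) + (α₂/2)‖x − y‖². Then F := f + r is (α₁ + α₂)-strongly convex. -/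
open MeasureTheory Set

noncomputable section

/-- **Strong convexity of the objective induced by stochastic models.** If the random models
`m_x` are a.s. convex with `m_x + r` being `α₁`-strongly convex, are unbiased at the basepoint
(`E[∇m_x(x)] = ∇f(x)`), and are accurate (`E[m_x(x) − m_x(y)] ≥ f(x) − f(y) + (α₂/2)‖x−y‖²`),
then `F = f + r` is `(α₁ + α₂)`-strongly convex. -/
theorem model_induced_strong_convexity
    {E : Type*} [NormedAddCommGroup E] [InnerProductSpace ℝ E] [FiniteDimensional ℝ E]
    {Ω : Type*} [MeasurableSpace Ω] (P : Measure Ω) [IsProbabilityMeasure P]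
    (f : E → ℝ) (f' : E → E) (hf : ∀ x : E, HasGradientAt f (f' x) x)
    (r : E → ℝ) (hr : ConvexOn ℝ univ r)
    (α₁ α₂ : ℝ) (hα₁ : 0 ≤ α₁) (hα₂ : 0 ≤ α₂)
    (m : E → Ω → E → ℝ) (m' : E → Ω → E)
    (hint : ∀ x y : E, Integrable (fun ω => m x ω y) P)
    (hint' : ∀ x : E, Integrable (fun ω => m' x ω) P)
    (ha : ∀ x : E, ∀ᵐ ω ∂P, ConvexOn ℝ univ (m x ω) ∧
      ConvexOn ℝ univ (fun y => m x ω y + r y - α₁ / 2 * ‖y‖ ^ 2))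
    (hb1 : ∀ x : E, ∀ᵐ ω ∂P, HasGradientAt (m x ω) (m' x ω) x)
    (hb2 : ∀ x : E, (∫ ω, m' x ω ∂P) = f' x)
    (hc : ∀ x y : E, (∫ ω, (m x ω x - m x ω y) ∂P)
      ≥ f x - f y + α₂ / 2 * ‖x - y‖ ^ 2) :
    ConvexOn ℝ univ (fun x => f x + r x - (α₁ + α₂) / 2 * ‖x‖ ^ 2) := by
  constructor
  · exact convex_univ
  intro a _ b _ wa wb hwa hwb hw
  set x : E := wa • a + wb • b with hxdef
  have hwb' : wb = 1 - wa := by linarith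
  -- norm identities
  have hxa : ‖x - a‖ ^ 2 = wb ^ 2 * ‖a - b‖ ^ 2 := by
    have : x - a = wb • (b - a) := by
      rw [hxdef, hwb']; module
    rw [this, norm_smul, norm_sub_rev]
    simp [abs_of_nonneg hwb, mul_pow]
  have hxb : ‖x - b‖ ^ 2 = wa ^ 2 * ‖a - b‖ ^ 2 := by
    have : x - b = wa • (a - b) := by
      rw [hxdef, hwb']; module
    rw [this, norm_smul]
    simp [abs_of_nonneg hwa, mul_pow]
  have hxx : ‖x‖ ^ 2 = wa * ‖a‖ ^ 2 + wb * ‖b‖ ^ 2 - wa * wb * ‖a - b‖ ^ 2 := by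
    have h1 := norm_add_sq_real (wa • a) (wb • b)
    have h2 := norm_sub_sq_real a b
    rw [norm_smul, norm_smul, real_inner_smul_left, real_inner_smul_right] at h1
    simp only [Real.norm_eq_abs, abs_of_nonneg hwa, abs_of_nonneg hwb, mul_pow] at h1
    rw [hxdef, hwb'] at *
    linear_combination h1 + (wa - wa ^ 2) * h2
  -- integrated strong convexity inequality
  set I1 : ℝ := ∫ ω, m x ω x ∂P with hI1
  set Ia : ℝ := ∫ ω, m x ω a ∂P with hIa
  set Ib : ℝ := ∫ ω, m x ω b ∂P with hIb
  have hconv : I1 + (r x - α₁ / 2 * ‖x‖ ^ 2)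
      ≤ wa * Ia + wb * Ib
        + (wa * (r a - α₁ / 2 * ‖a‖ ^ 2) + wb * (r b - α₁ / 2 * ‖b‖ ^ 2)) := by
    have hg1 : Integrable (fun ω => m x ω x + (r x - α₁ / 2 * ‖x‖ ^ 2)) P :=
      (hint x x).add (integrable_const _)
    have hg2 : Integrable (fun ω => wa * m x ω a + wb * m x ω b
        + (wa * (r a - α₁ / 2 * ‖a‖ ^ 2) + wb * (r b - α₁ / 2 * ‖b‖ ^ 2))) P :=
      (((hint x a).const_mul wa).add ((hint x b).const_mul wb)).add (integrable_const _)
    have hmono : (∫ ω, (m x ω x + (r x - α₁ / 2 * ‖x‖ ^ 2)) ∂P)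
        ≤ ∫ ω, (wa * m x ω a + wb * m x ω b
            + (wa * (r a - α₁ / 2 * ‖a‖ ^ 2) + wb * (r b - α₁ / 2 * ‖b‖ ^ 2))) ∂P := by
      refine integral_mono_ae hg1 hg2 ?_
      filter_upwards [ha x] with ω hω
      have h := hω.2.2 (mem_univ a) (mem_univ b) hwa hwb hw
      simp only [smul_eq_mul] at h
      have : m x ω x + r x - α₁ / 2 * ‖x‖ ^ 2
          ≤ wa * (m x ω a + r a - α₁ / 2 * ‖a‖ ^ 2)
            + wb * (m x ω b + r b - α₁ / 2 * ‖b‖ ^ 2) := h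
      ring_nf
      ring_nf at this
      linarith
    have hg3 : Integrable (fun ω => wa * m x ω a + wb * m x ω b) P :=
      ((hint x a).const_mul wa).add ((hint x b).const_mul wb)
    rw [integral_add (hint x x) (integrable_const _),
      integral_add hg3 (integrable_const _),
      integral_add ((hint x a).const_mul wa) ((hint x b).const_mul wb),
      integral_const_mul, integral_const_mul, integral_const, integral_const] at hmono
    simpa using hmono
  -- accuracy inequalities
  have hca : I1 - Ia ≥ f x - f a + α₂ / 2 * ‖x - a‖ ^ 2 := by
    have := hc x a
    rwa [integral_sub (hint x x) (hint x a)] at this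
  have hcb : I1 - Ib ≥ f x - f b + α₂ / 2 * ‖x - b‖ ^ 2 := by
    have := hc x b
    rwa [integral_sub (hint x x) (hint x b)] at this
  have h1 : wa * (I1 - Ia) ≥ wa * (f x - f a + α₂ / 2 * (wb ^ 2 * ‖a - b‖ ^ 2)) := by
    rw [← hxa]; exact mul_le_mul_of_nonneg_left hca hwa
  have h2 : wb * (I1 - Ib) ≥ wb * (f x - f b + α₂ / 2 * (wa ^ 2 * ‖a - b‖ ^ 2)) := by
    rw [← hxb]; exact mul_le_mul_of_nonneg_left hcb hwb
  -- combine
  show f x + r x - (α₁ + α₂) / 2 * ‖x‖ ^ 2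
      ≤ wa • (f a + r a - (α₁ + α₂) / 2 * ‖a‖ ^ 2) + wb • (f b + r b - (α₁ + α₂) / 2 * ‖b‖ ^ 2)
  simp only [smul_eq_mul]
  rw [hxx]
  subst hwb'
  nlinarith [h1, h2, hconv, sq_nonneg (wa - 1), sq_nonneg wa]
end
end

section
/- (Transfer of inexact static guarantees to the equilibrium problem) Suppose f_y is α-strongly convex for every y ∈ E, set ρ := γβ/α, and assume ρ ≤ 1/2. Fix x ∈ E, j ∈ ℕ, constants B ≥ 0, C ≥ 0, q ∈ (0,1), and let X_j : Ω → E be a random point on a probability space (Ω, P) satisfying, for every y ∈ E, E[φ_x(X_j)] − φ_x(y) ≤ C(1 − q)^j · (φ_x(x) − φ_x(y) + (α/2)·E‖X_j − y‖²) + B, where φ_x := f_x + r. If moreover 1 − ρ − C(1 − q)^j > 0, then with φ := f_{x̄} + r: E[φ(X_j)] − φ(x̄) ≤ ((ρ + 2C(1 − q)^j)/(1 − ρ − C(1 − q)^j))·(φ(x) − φ(x̄)) + B/(1 − ρ − C(1 − q)^j). -/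
open MeasureTheory Set
open scoped RealInnerProductSpace

noncomputable section
set_option maxHeartbeats 1000000

lemma quad_growth_aux' {E : Type*} [NormedAddCommGroup E] [InnerProductSpace ℝ E]
    {φ : E → ℝ} {α : ℝ} (hα : 0 < α)
    (hconv : ConvexOn ℝ univ (fun y => φ y - α / 2 * ‖y‖ ^ 2))
    {xbar : E} (hmin : ∀ y, φ xbar ≤ φ y) (y : E) :
    α / 2 * ‖y - xbar‖ ^ 2 ≤ φ y - φ xbar := by
  have hSC : StrongConvexOn univ α φ := strongConvexOn_iff_convex.mpr hconv
  by_contra h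
  push_neg at h
  have hD : 0 ≤ φ y - φ xbar := sub_nonneg.mpr (hmin y)
  have hKpos : 0 < α / 2 * ‖y - xbar‖ ^ 2 := lt_of_le_of_lt hD h
  set K := α / 2 * ‖y - xbar‖ ^ 2 with hKdef
  set t := (K - (φ y - φ xbar)) / (2 * K) with htdef
  have ht0 : 0 < t := div_pos (by linarith) (by linarith)
  have ht1 : t < 1 := by
    rw [htdef, div_lt_one (by linarith)]; linarith
  have key := hSC.2 (mem_univ y) (mem_univ xbar) ht0.le
    (by linarith : (0:ℝ) ≤ 1 - t) (by ring)
  simp only [smul_eq_mul] at key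
  have hmin' := hmin (t • y + (1 - t) • xbar)
  have h2 : t * ((1 - t) * K) ≤ t * (φ y - φ xbar) := by
    have hKr : α / 2 * ‖y - xbar‖ ^ 2 = K := rfl
    rw [hKr] at key
    nlinarith [key, hmin']
  have h3 : (1 - t) * K ≤ φ y - φ xbar := le_of_mul_le_mul_left h2 ht0
  have ht2 : t * (2 * K) = K - (φ y - φ xbar) := by
    rw [htdef]; field_simp
  nlinarith [h3, ht2, h]


/-- **Transfer of inexact static guarantees to the equilibrium problem.** If every `f_y` is
`α`-strongly convex, `ρ = γβ/α ≤ 1/2`, and a random point `X_j` satisfies the inexact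
guarantee `E[φ_x(X_j)] − φ_x(y) ≤ C(1−q)^j(φ_x(x) − φ_x(y) + (α/2)E‖X_j − y‖²) + B` for
every `y`, with `1 − ρ − C(1−q)^j > 0`, then with `φ = f_{x̄} + r`:
`E[φ(X_j)] − φ(x̄) ≤ ((ρ + 2C(1−q)^j)/(1 − ρ − C(1−q)^j))(φ(x) − φ(x̄))
  + B/(1 − ρ − C(1−q)^j)`. -/
theorem transfer_inexact_static_guarantee
    {E : Type*} [NormedAddCommGroup E] [InnerProductSpace ℝ E] [FiniteDimensional ℝ E]
    {Z : Type*} [MetricSpace Z] [MeasurableSpace Z] [BorelSpace Z]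
    (ℓ : E → Z → ℝ) (G : E → Z → E) (β γ : ℝ) (hβ : 0 ≤ β) (hγ : 0 ≤ γ)
    (hgrad : ∀ (x : E) (z : Z), HasGradientAt (fun x' => ℓ x' z) (G x z) x)
    (hlip : ∀ (x : E) (z z' : Z), ‖G x z - G x z'‖ ≤ β * dist z z')
    (D : E → Measure Z) (hD : ∀ x : E, IsProbabilityMeasure (D x))
    (hint : ∀ x y : E, Integrable (fun z => ℓ y z) (D x))
    (hintG : ∀ x y : E, Integrable (fun z => G y z) (D x))
    (f : E → E → ℝ) (Gf : E → E → E)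
    (hfdef : ∀ x y : E, f x y = ∫ z, ℓ y z ∂(D x))
    (hGfdef : ∀ x y : E, Gf x y = ∫ z, G y z ∂(D x))
    (hfgrad : ∀ x y : E, HasGradientAt (f x) (Gf x y) y)
    (hDlip : ∀ x y : E, ∀ g : Z → ℝ, LipschitzWith 1 g →
      |(∫ z, g z ∂(D x)) - ∫ z, g z ∂(D y)| ≤ γ * ‖x - y‖)
    (r : E → ℝ) (hr : ConvexOn ℝ univ r)
    (xbar : E) (hxbar : ∀ y : E, f xbar xbar + r xbar ≤ f xbar y + r y)
    (α : ℝ) (hα : 0 < α)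
    (hsc : ∀ x : E, ConvexOn ℝ univ (fun y => f x y - α / 2 * ‖y‖ ^ 2))
    (hρ : γ * β / α ≤ 1 / 2)
    (x : E) (j : ℕ) (B C q : ℝ) (hB : 0 ≤ B) (hC : 0 ≤ C) (hq0 : 0 < q) (hq1 : q < 1)
    {Ω : Type*} [MeasurableSpace Ω] (P : Measure Ω) [IsProbabilityMeasure P]
    (X : Ω → E)
    (hintφx : Integrable (fun ω => f x (X ω) + r (X ω)) P)
    (hintφ : Integrable (fun ω => f xbar (X ω) + r (X ω)) P)
    (hintX : ∀ y : E, Integrable (fun ω => ‖X ω - y‖ ^ 2) P)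
    (hguarantee : ∀ y : E,
      (∫ ω, (f x (X ω) + r (X ω)) ∂P) - (f x y + r y)
        ≤ C * (1 - q) ^ j * (f x x + r x - (f x y + r y)
            + α / 2 * (∫ ω, ‖X ω - y‖ ^ 2 ∂P)) + B)
    (hpos : 0 < 1 - γ * β / α - C * (1 - q) ^ j) :
    (∫ ω, (f xbar (X ω) + r (X ω)) ∂P) - (f xbar xbar + r xbar)
      ≤ ((γ * β / α + 2 * C * (1 - q) ^ j) / (1 - γ * β / α - C * (1 - q) ^ j))
          * (f xbar x + r x - (f xbar xbar + r xbar))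
        + B / (1 - γ * β / α - C * (1 - q) ^ j) := by
  classical
  have hαne : (α:ℝ) ≠ 0 := hα.ne'
  have hρ0 : 0 ≤ γ * β / α := div_nonneg (mul_nonneg hγ hβ) hα.le
  have hε : 0 ≤ C * (1 - q) ^ j := mul_nonneg hC (pow_nonneg (by linarith) j)
  -- quadratic growth of φ = f xbar + r around its minimizer xbar
  have hconv : ConvexOn ℝ univ (fun y => (f xbar y + r y) - α / 2 * ‖y‖ ^ 2) := by
    have h1 := (hsc xbar).add hr
    have h2 : ((fun y => f xbar y - α / 2 * ‖y‖ ^ 2) + r)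
        = fun y => (f xbar y + r y) - α / 2 * ‖y‖ ^ 2 := by
      funext y; simp only [Pi.add_apply]; ring
    rwa [h2] at h1
  have hgrow : ∀ y : E, α / 2 * ‖y - xbar‖ ^ 2
      ≤ (f xbar y + r y) - (f xbar xbar + r xbar) :=
    fun y => quad_growth_aux' hα hconv hxbar y
  -- bound on the deviation of the gradients
  have hgradbound : ∀ y : E, ‖Gf x y - Gf xbar y‖ ≤ γ * β * ‖x - xbar‖ := by
    intro y
    have hvbound : ∀ v : E, |⟪v, Gf x y - Gf xbar y⟫| ≤ β * ‖v‖ * (γ * ‖x - xbar‖) := by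
      intro v
      have hginteq : ∀ u : E, (∫ z, ⟪v, G y z⟫ ∂(D u)) = ⟪v, Gf u y⟫ := fun u => by
        rw [hGfdef]; exact integral_inner (hintG u y) v
      have hA : ⟪v, Gf x y - Gf xbar y⟫
          = (∫ z, ⟪v, G y z⟫ ∂(D x)) - ∫ z, ⟪v, G y z⟫ ∂(D xbar) := by
        rw [hginteq, hginteq, inner_sub_right]
      have hkey : ∀ δ : ℝ, 0 < δ →
          |⟪v, Gf x y - Gf xbar y⟫| ≤ (β * ‖v‖ + δ) * (γ * ‖x - xbar‖) := by
        intro δ hδ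
        have hc : 0 < β * ‖v‖ + δ := by positivity
        set g : Z → ℝ := fun z => (β * ‖v‖ + δ)⁻¹ * ⟪v, G y z⟫ with hg
        have hgl : LipschitzWith 1 g := by
          apply LipschitzWith.of_dist_le_mul
          intro z z'
          rw [Real.dist_eq, NNReal.coe_one, one_mul]
          have heq : g z - g z' = (β * ‖v‖ + δ)⁻¹ * ⟪v, G y z - G y z'⟫ := by
            simp only [hg]
            rw [inner_sub_right]
            ring
          rw [heq, abs_mul, abs_inv, abs_of_pos hc]
          have h1 : |⟪v, G y z - G y z'⟫| ≤ ‖v‖ * ‖G y z - G y z'‖ :=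
            abs_real_inner_le_norm _ _
          have h2 : ‖G y z - G y z'‖ ≤ β * dist z z' := hlip y z z'
          have h4 : ‖v‖ * ‖G y z - G y z'‖ ≤ ‖v‖ * (β * dist z z') :=
            mul_le_mul_of_nonneg_left h2 (norm_nonneg v)
          have h5 : ‖v‖ * (β * dist z z') ≤ (β * ‖v‖ + δ) * dist z z' := by
            nlinarith [dist_nonneg (x := z) (y := z'), norm_nonneg v]
          have h3 : |⟪v, G y z - G y z'⟫| ≤ (β * ‖v‖ + δ) * dist z z' := by linarith
          have h6 := mul_le_mul_of_nonneg_left h3 (inv_nonneg.mpr hc.le)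
          have h7 : (β * ‖v‖ + δ)⁻¹ * ((β * ‖v‖ + δ) * dist z z') = dist z z' := by
            field_simp
          linarith
        have hDL := hDlip x xbar g hgl
        have hgint : ∀ u : E, (∫ z, g z ∂(D u))
            = (β * ‖v‖ + δ)⁻¹ * ∫ z, ⟪v, G y z⟫ ∂(D u) := fun u => by
          simp only [hg]
          exact integral_const_mul _ _
        rw [hgint, hgint, ← mul_sub, abs_mul, abs_inv, abs_of_pos hc] at hDL
        have h8 := mul_le_mul_of_nonneg_left hDL hc.le
        have h9 : (β * ‖v‖ + δ) * ((β * ‖v‖ + δ)⁻¹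
            * |(∫ z, ⟪v, G y z⟫ ∂(D x)) - ∫ z, ⟪v, G y z⟫ ∂(D xbar)|)
            = |(∫ z, ⟪v, G y z⟫ ∂(D x)) - ∫ z, ⟪v, G y z⟫ ∂(D xbar)| := by
          field_simp
        rw [hA]
        linarith
      by_contra hcon
      push_neg at hcon
      have hga : 0 ≤ γ * ‖x - xbar‖ := mul_nonneg hγ (norm_nonneg _)
      rcases hga.eq_or_lt with h0 | h0
      · have h1 := hkey 1 one_pos
        have h2 : (β * ‖v‖ + 1) * (γ * ‖x - xbar‖) = 0 := by rw [← h0]; ring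
        have h3 : β * ‖v‖ * (γ * ‖x - xbar‖) = 0 := by rw [← h0]; ring
        linarith
      · have hδpos : 0 < (|⟪v, Gf x y - Gf xbar y⟫| - β * ‖v‖ * (γ * ‖x - xbar‖))
            / (2 * (γ * ‖x - xbar‖)) := div_pos (by linarith) (by linarith)
        have h1 := hkey _ hδpos
        rw [add_mul] at h1
        have hδval : (|⟪v, Gf x y - Gf xbar y⟫| - β * ‖v‖ * (γ * ‖x - xbar‖))
            / (2 * (γ * ‖x - xbar‖)) * (γ * ‖x - xbar‖)
            = (|⟪v, Gf x y - Gf xbar y⟫| - β * ‖v‖ * (γ * ‖x - xbar‖)) / 2 := by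
          rw [div_mul_eq_mul_div, div_eq_div_iff (mul_pos two_pos h0).ne' two_ne_zero]
          ring
        rw [hδval] at h1
        linarith
    have h1 := hvbound (Gf x y - Gf xbar y)
    rw [real_inner_self_eq_norm_sq] at h1
    rw [abs_of_nonneg (by positivity : (0:ℝ) ≤ ‖Gf x y - Gf xbar y‖ ^ 2)] at h1
    rcases (norm_nonneg (Gf x y - Gf xbar y)).eq_or_lt with h0 | h0
    · rw [← h0]; positivity
    · refine le_of_mul_le_mul_right ?_ h0
      nlinarith [h1]
  -- mean value inequality for the deviation function
  have hmvt : ∀ y₁ y₂ : E, (f x y₁ - f xbar y₁) - (f x y₂ - f xbar y₂)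
      ≤ γ * β * ‖x - xbar‖ * ‖y₁ - y₂‖ := by
    intro y₁ y₂
    have hder : ∀ w ∈ (univ : Set E), HasFDerivWithinAt (fun y => f x y - f xbar y)
        ((InnerProductSpace.toDual ℝ E) (Gf x w) - (InnerProductSpace.toDual ℝ E) (Gf xbar w))
        univ w := fun w _ =>
      ((hfgrad x w).hasFDerivAt.sub (hfgrad xbar w).hasFDerivAt).hasFDerivWithinAt
    have hbd : ∀ w ∈ (univ : Set E),
        ‖(InnerProductSpace.toDual ℝ E) (Gf x w) - (InnerProductSpace.toDual ℝ E) (Gf xbar w)‖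
          ≤ γ * β * ‖x - xbar‖ := fun w _ => by
      rw [← map_sub, (InnerProductSpace.toDual ℝ E).norm_map]
      exact hgradbound w
    have hm := Convex.norm_image_sub_le_of_norm_hasFDerivWithin_le hder hbd convex_univ
      (mem_univ y₂) (mem_univ y₁)
    rw [Real.norm_eq_abs] at hm
    exact le_trans (le_abs_self _) hm
  -- integral facts
  have h4 : α / 2 * (∫ ω, ‖X ω - xbar‖ ^ 2 ∂P)
      ≤ (∫ ω, (f xbar (X ω) + r (X ω)) ∂P) - (f xbar xbar + r xbar) := by
    have hint1 : Integrable (fun ω => α / 2 * ‖X ω - xbar‖ ^ 2) P := (hintX xbar).const_mul _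
    have hint2 : Integrable (fun ω => (f xbar (X ω) + r (X ω)) - (f xbar xbar + r xbar)) P :=
      hintφ.sub (integrable_const _)
    have hmono := integral_mono hint1 hint2 (fun ω => hgrow (X ω))
    rw [integral_const_mul, integral_sub hintφ (integrable_const _), integral_const] at hmono
    simpa [measure_univ] using hmono
  -- deviation term bound
  have h5 : (f x xbar - f xbar xbar)
      - ((∫ ω, (f x (X ω) + r (X ω)) ∂P) - (∫ ω, (f xbar (X ω) + r (X ω)) ∂P))
      ≤ γ * β / 2 * (‖x - xbar‖ ^ 2 + ∫ ω, ‖X ω - xbar‖ ^ 2 ∂P) := by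
    have hpt : ∀ ω : Ω, (f x xbar - f xbar xbar)
        - ((f x (X ω) + r (X ω)) - (f xbar (X ω) + r (X ω)))
        ≤ γ * β / 2 * (‖x - xbar‖ ^ 2 + ‖X ω - xbar‖ ^ 2) := by
      intro ω
      have h1 := hmvt xbar (X ω)
      have h2 : ‖xbar - X ω‖ = ‖X ω - xbar‖ := norm_sub_rev _ _
      rw [h2] at h1
      have h3 : γ * β * ‖x - xbar‖ * ‖X ω - xbar‖
          ≤ γ * β / 2 * (‖x - xbar‖ ^ 2 + ‖X ω - xbar‖ ^ 2) := by
        nlinarith [mul_nonneg (mul_nonneg hγ hβ) (sq_nonneg (‖x - xbar‖ - ‖X ω - xbar‖))]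
      have h10 : (f x xbar - f xbar xbar)
          - ((f x (X ω) + r (X ω)) - (f xbar (X ω) + r (X ω)))
          = (f x xbar - f xbar xbar) - (f x (X ω) - f xbar (X ω)) := by ring
      rw [h10]
      linarith
    have hint1 : Integrable (fun ω => (f x xbar - f xbar xbar)
        - ((f x (X ω) + r (X ω)) - (f xbar (X ω) + r (X ω)))) P :=
      (integrable_const _).sub (hintφx.sub hintφ)
    have hint2 : Integrable (fun ω => γ * β / 2 * (‖x - xbar‖ ^ 2 + ‖X ω - xbar‖ ^ 2)) P :=
      ((integrable_const _).add (hintX xbar)).const_mul _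
    have hint3 : Integrable (fun ω => (f x (X ω) + r (X ω)) - (f xbar (X ω) + r (X ω))) P :=
      hintφx.sub hintφ
    have hmono := integral_mono hint1 hint2 (fun ω => hpt ω)
    rw [integral_sub (integrable_const _) hint3, integral_const,
      integral_sub hintφx hintφ, integral_const_mul,
      integral_add (integrable_const _) (hintX xbar), integral_const] at hmono
    simpa [measure_univ] using hmono
  -- the static guarantee at xbar
  have hg := hguarantee xbar
  have hgrow_x : α / 2 * ‖x - xbar‖ ^ 2
      ≤ (f xbar x + r x) - (f xbar xbar + r xbar) := hgrow x
  have hmvt2 : (f x x - f xbar x) - (f x xbar - f xbar xbar)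
      ≤ γ * β * ‖x - xbar‖ * ‖x - xbar‖ := hmvt x xbar
  have hγβα : γ * β = γ * β / α * α := (div_mul_cancel₀ _ hαne).symm
  have hQ : (f x x + r x) - (f x xbar + r xbar)
      ≤ ((f xbar x + r x) - (f xbar xbar + r xbar))
        + 2 * (γ * β / α) * ((f xbar x + r x) - (f xbar xbar + r xbar)) := by
    have h1 : γ * β * ‖x - xbar‖ * ‖x - xbar‖
        ≤ 2 * (γ * β / α) * ((f xbar x + r x) - (f xbar xbar + r xbar)) := by
      have h2 : γ * β * ‖x - xbar‖ * ‖x - xbar‖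
          = 2 * (γ * β / α) * (α / 2 * ‖x - xbar‖ ^ 2) := by
        field_simp
      rw [h2]
      exact mul_le_mul_of_nonneg_left hgrow_x (by positivity)
    have h3 : (f x x + r x) - (f x xbar + r xbar)
        = ((f xbar x + r x) - (f xbar xbar + r xbar))
          + ((f x x - f xbar x) - (f x xbar - f xbar xbar)) := by ring
    linarith
  -- combine the guarantee
  have hg2 : (∫ ω, (f x (X ω) + r (X ω)) ∂P) - (f x xbar + r xbar)
      ≤ C * (1 - q) ^ j * (((f xbar x + r x) - (f xbar xbar + r xbar))
          + 2 * (γ * β / α) * ((f xbar x + r x) - (f xbar xbar + r xbar))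
          + α / 2 * (∫ ω, ‖X ω - xbar‖ ^ 2 ∂P)) + B := by
    refine le_trans hg ?_
    have hmm := mul_le_mul_of_nonneg_left
      (by linarith : f x x + r x - (f x xbar + r xbar) + α / 2 * (∫ ω, ‖X ω - xbar‖ ^ 2 ∂P)
        ≤ ((f xbar x + r x) - (f xbar xbar + r xbar))
          + 2 * (γ * β / α) * ((f xbar x + r x) - (f xbar xbar + r xbar))
          + α / 2 * (∫ ω, ‖X ω - xbar‖ ^ 2 ∂P)) hε
    linarith
  -- bound deviation term by ρ S + ρ T
  have h5' : (f x xbar - f xbar xbar)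
      - ((∫ ω, (f x (X ω) + r (X ω)) ∂P) - (∫ ω, (f xbar (X ω) + r (X ω)) ∂P))
      ≤ γ * β / α * ((f xbar x + r x) - (f xbar xbar + r xbar))
        + γ * β / α * ((∫ ω, (f xbar (X ω) + r (X ω)) ∂P) - (f xbar xbar + r xbar)) := by
    have h6 : γ * β / 2 * (‖x - xbar‖ ^ 2 + ∫ ω, ‖X ω - xbar‖ ^ 2 ∂P)
        = γ * β / α * (α / 2 * ‖x - xbar‖ ^ 2)
          + γ * β / α * (α / 2 * (∫ ω, ‖X ω - xbar‖ ^ 2 ∂P)) := by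
      field_simp
    have h7 := mul_le_mul_of_nonneg_left hgrow_x hρ0
    have h8 := mul_le_mul_of_nonneg_left h4 hρ0
    linarith [h5]
  -- ε·T bound
  have hεT : C * (1 - q) ^ j * (α / 2 * (∫ ω, ‖X ω - xbar‖ ^ 2 ∂P))
      ≤ C * (1 - q) ^ j * ((∫ ω, (f xbar (X ω) + r (X ω)) ∂P) - (f xbar xbar + r xbar)) :=
    mul_le_mul_of_nonneg_left h4 hε
  -- 2ρε ≤ ε
  have h2ρε : C * (1 - q) ^ j * (2 * (γ * β / α)
        * ((f xbar x + r x) - (f xbar xbar + r xbar)))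
      ≤ C * (1 - q) ^ j * ((f xbar x + r x) - (f xbar xbar + r xbar)) := by
    have hS : 0 ≤ (f xbar x + r x) - (f xbar xbar + r xbar) := by linarith [hxbar x]
    have h1 : 2 * (γ * β / α) * ((f xbar x + r x) - (f xbar xbar + r xbar))
        ≤ 1 * ((f xbar x + r x) - (f xbar xbar + r xbar)) :=
      mul_le_mul_of_nonneg_right (by linarith) hS
    have h2 := mul_le_mul_of_nonneg_left h1 hε
    linarith
  -- final linear inequality
  have hfin : (1 - γ * β / α - C * (1 - q) ^ j)
      * ((∫ ω, (f xbar (X ω) + r (X ω)) ∂P) - (f xbar xbar + r xbar))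
      ≤ (γ * β / α + 2 * (C * (1 - q) ^ j))
          * ((f xbar x + r x) - (f xbar xbar + r xbar)) + B := by
    nlinarith [hg2, h5', hεT, h2ρε]
  rw [div_mul_eq_mul_div, ← add_div, le_div_iff₀ hpos]
  nlinarith [hfin]
end
end

section
/- (Lower bound on the prox-gradient displacement under a biased gradient) In the biased-oracle setting, fix a constant 0 < η ≤ 2/L, a point y ∈ E, and a vector v ∈ E satisfying ‖v − ∇f(y)‖ ≤ B·‖y − x̄‖. Define y⁺ = prox_{ηr}(y − η·v) and the displacement g̃ = (y − y⁺)/η, and set α̂ := α − 2B. Then ‖g̃‖ ≥ (α̂/(2(1 + ηB)))·‖y − x̄‖. -/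
open MeasureTheory Set

noncomputable section

open Filter Topology

local notation "⟪" x ", " y "⟫" => @inner ℝ _ _ x y

section PGDHelpers

variable {E : Type*} [NormedAddCommGroup E] [InnerProductSpace ℝ E] [CompleteSpace E]

lemma pgd_tendsto_slope {f : E → ℝ} {g x : E} (h : HasGradientAt f g x) (u : E) :
    Tendsto (fun t : ℝ => (f (x + t • u) - f x) / t) (𝓝[>] (0:ℝ)) (𝓝 ⟪g, u⟫) := by
  have hc : HasDerivAt (fun t : ℝ => x + t • u) u (0:ℝ) := by
    simpa using ((hasDerivAt_id (0:ℝ)).smul_const u).const_add x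
  have hF : HasDerivAt (fun t : ℝ => f (x + t • u)) ⟪g, u⟫ 0 := by
    have hf : HasFDerivAt f (InnerProductSpace.toDual ℝ E g) x :=
      hasGradientAt_iff_hasFDerivAt.mp h
    have hf' : HasFDerivAt f (InnerProductSpace.toDual ℝ E g)
        ((fun t : ℝ => x + t • u) 0) := by simpa using hf
    have hcomp := hf'.comp_hasDerivAt 0 hc
    simp [InnerProductSpace.toDual_apply_apply] at hcomp
    exact hcomp
  rw [hasDerivAt_iff_tendsto_slope] at hF
  have hsub : 𝓝[>] (0:ℝ) ≤ 𝓝[≠] (0:ℝ) :=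
    nhdsWithin_mono _ (fun t ht => ne_of_gt ht)
  refine (hF.mono_left hsub).congr' ?_
  filter_upwards [self_mem_nhdsWithin] with t ht
  simp [slope_def_field]

lemma pgd_first_order {f : E → ℝ} {g x : E} (hf : ConvexOn ℝ univ f)
    (h : HasGradientAt f g x) (y : E) : f x + ⟪g, y - x⟫ ≤ f y := by
  have hs := pgd_tendsto_slope h (y - x)
  have hb : ∀ᶠ t in 𝓝[>] (0:ℝ), (f (x + t • (y - x)) - f x) / t ≤ f y - f x := by
    filter_upwards [Ioc_mem_nhdsGT_of_mem (by simp : (0:ℝ) ∈ Ico (0:ℝ) 1)] with t ht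
    obtain ⟨ht0, ht1⟩ := ht
    have hcx : x + t • (y - x) = (1 - t) • x + t • y := by
      rw [smul_sub]; module
    have hcv := hf.2 (mem_univ x) (mem_univ y) (by linarith : (0:ℝ) ≤ 1 - t) ht0.le
      (by ring : (1 - t) + t = 1)
    rw [← hcx] at hcv
    simp only [smul_eq_mul] at hcv
    rw [div_le_iff₀ ht0]
    nlinarith [hcv]
  have := le_of_tendsto hs hb
  linarith

lemma pgd_grad_normSq (c : ℝ) (x : E) :
    HasGradientAt (fun y : E => c * ‖y‖ ^ 2) ((2 * c) • x) x := by
  rw [hasGradientAt_iff_hasFDerivAt]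
  have h1 : HasFDerivAt (fun y : E => (⟪y, y⟫ : ℝ))
      ((fderivInnerCLM ℝ (x, x)).comp ((ContinuousLinearMap.id ℝ E).prod
        (ContinuousLinearMap.id ℝ E))) x :=
    (hasFDerivAt_id x).inner ℝ (hasFDerivAt_id x)
  have h2 : HasFDerivAt (fun y : E => c * ‖y‖ ^ 2)
      (c • ((fderivInnerCLM ℝ (x, x)).comp ((ContinuousLinearMap.id ℝ E).prod
        (ContinuousLinearMap.id ℝ E)))) x := by
    have : (fun y : E => c * ‖y‖ ^ 2) = fun y : E => c * (⟪y, y⟫ : ℝ) := by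
      funext y; rw [real_inner_self_eq_norm_sq]
    rw [this]
    exact h1.const_mul c
  refine h2.congr_fderiv ?_
  ext v
  simp [fderivInnerCLM_apply, InnerProductSpace.toDual_apply_apply, real_inner_smul_left,
    real_inner_comm]
  ring

lemma pgd_grad_sub {f : E → ℝ} {g x : E} (h : HasGradientAt f g x) (c : ℝ) :
    HasGradientAt (fun y => f y - c * ‖y‖ ^ 2) (g - (2 * c) • x) x := by
  rw [hasGradientAt_iff_hasFDerivAt] at *
  have h2 := hasGradientAt_iff_hasFDerivAt.mp (pgd_grad_normSq c x)
  have := h.sub h2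
  refine this.congr_fderiv ?_
  ext v
  simp [InnerProductSpace.toDual_apply_apply, inner_sub_left]

lemma pgd_grad_sub' {f : E → ℝ} {g x : E} (h : HasGradientAt f g x) (c : ℝ) :
    HasGradientAt (fun y => c * ‖y‖ ^ 2 - f y) ((2 * c) • x - g) x := by
  rw [hasGradientAt_iff_hasFDerivAt] at *
  have h2 := hasGradientAt_iff_hasFDerivAt.mp (pgd_grad_normSq c x)
  have := h2.sub h
  refine this.congr_fderiv ?_
  ext v
  simp [InnerProductSpace.toDual_apply_apply, inner_sub_left]

lemma pgd_strong_first_order {f : E → ℝ} {f' : E → E} {c : ℝ}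
    (hgrad : ∀ x, HasGradientAt f (f' x) x)
    (hc : ConvexOn ℝ univ (fun x => f x - c / 2 * ‖x‖ ^ 2)) (a b : E) :
    f a + ⟪f' a, b - a⟫ + c / 2 * ‖b - a‖ ^ 2 ≤ f b := by
  have h := pgd_first_order hc (pgd_grad_sub (hgrad a) (c / 2)) b
  have e1 : ⟪f' a - (2 * (c / 2)) • a, b - a⟫
      = ⟪f' a, b - a⟫ - c * ⟪a, b⟫ + c * ⟪a, a⟫ := by
    simp only [inner_sub_left, inner_sub_right, real_inner_smul_left]
    ring
  have e2 : ‖b - a‖ ^ 2 = ‖b‖ ^ 2 - 2 * ⟪a, b⟫ + ‖a‖ ^ 2 := by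
    rw [← real_inner_self_eq_norm_sq, ← real_inner_self_eq_norm_sq,
      ← real_inner_self_eq_norm_sq, inner_sub_sub_self]
    rw [real_inner_comm b a]; ring
  have e3 : (⟪a, a⟫ : ℝ) = ‖a‖ ^ 2 := real_inner_self_eq_norm_sq a
  rw [e1, e3] at h
  rw [e2]
  linarith

lemma pgd_mono {f : E → ℝ} {f' : E → E} {c : ℝ}
    (hgrad : ∀ x, HasGradientAt f (f' x) x)
    (hc : ConvexOn ℝ univ (fun x => f x - c / 2 * ‖x‖ ^ 2)) (a b : E) :
    c * ‖a - b‖ ^ 2 ≤ ⟪f' a - f' b, a - b⟫ := by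
  have h1 := pgd_strong_first_order hgrad hc a b
  have h2 := pgd_strong_first_order hgrad hc b a
  have e1 : ⟪f' a - f' b, a - b⟫ = -⟪f' a, b - a⟫ - ⟪f' b, a - b⟫ := by
    rw [inner_sub_left]
    have : (b : E) - a = -(a - b) := by abel
    rw [this, inner_neg_right]; ring
  have e2 : ‖b - a‖ = ‖a - b‖ := norm_sub_rev _ _
  rw [e1]
  rw [e2] at h1
  nlinarith [h1, h2]

lemma pgd_convexOn_of_mono {h : E → ℝ} {h' : E → E}
    (hd : ∀ x, HasGradientAt h (h' x) x)
    (mono : ∀ a b : E, 0 ≤ ⟪h' a - h' b, a - b⟫) : ConvexOn ℝ (univ : Set E) h := by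
  refine ⟨convex_univ, ?_⟩
  intro x _ y _ a b ha hb hab
  set φ : ℝ → ℝ := fun t => h (x + t • (y - x)) with hφ
  have hφd : ∀ t : ℝ, HasDerivAt φ ⟪h' (x + t • (y - x)), y - x⟫ t := by
    intro t
    have hc : HasDerivAt (fun s : ℝ => x + s • (y - x)) (y - x) t := by
      simpa using ((hasDerivAt_id t).smul_const (y - x)).const_add x
    have hf : HasFDerivAt h (InnerProductSpace.toDual ℝ E (h' (x + t • (y - x))))
        ((fun s : ℝ => x + s • (y - x)) t) := by
      simpa using hasGradientAt_iff_hasFDerivAt.mp (hd (x + t • (y - x)))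
    have hcomp := hf.comp_hasDerivAt t hc
    simp [InnerProductSpace.toDual_apply_apply] at hcomp
    exact hcomp
  have hdiff : Differentiable ℝ φ := fun t => (hφd t).differentiableAt
  have hderiv : deriv φ = fun t => ⟪h' (x + t • (y - x)), y - x⟫ :=
    funext fun t => (hφd t).deriv
  have hmono : Monotone (deriv φ) := by
    rw [hderiv]
    intro s t hst
    rcases eq_or_lt_of_le hst with rfl | hlt
    · exact le_rfl
    · dsimp only
      have hm := mono (x + t • (y - x)) (x + s • (y - x))
      have he : (x + t • (y - x)) - (x + s • (y - x)) = (t - s) • (y - x) := by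
        rw [smul_sub, smul_sub, smul_sub]; module
      rw [he, inner_sub_left, real_inner_smul_right, real_inner_smul_right] at hm
      have hts : 0 < t - s := by linarith
      nlinarith [hm, hts]
  have hconv : ConvexOn ℝ univ φ := hmono.convexOn_univ_of_deriv hdiff
  have hkey := hconv.2 (mem_univ (0:ℝ)) (mem_univ (1:ℝ)) ha hb hab
  simp only [smul_eq_mul, mul_zero, mul_one, zero_add] at hkey
  have e1 : φ 0 = h x := by simp [hφ]
  have e2 : φ 1 = h y := by simp [hφ]
  have e0 : a • x + b • y = x + b • (y - x) := by
    have ha1 : a = 1 - b := by linarith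
    rw [ha1, smul_sub]; module
  rw [e1, e2] at hkey
  calc h (a • x + b • y) = φ b := by rw [hφ, e0]
    _ ≤ a * h x + b * h y := hkey
    _ = a • h x + b • h y := by simp [smul_eq_mul]

lemma pgd_descent {f : E → ℝ} {f' : E → E} {L : ℝ} (hL : 0 < L)
    (hgrad : ∀ x, HasGradientAt f (f' x) x)
    (hLip : ∀ a b : E, ‖f' a - f' b‖ ≤ L * ‖a - b‖) (a b : E) :
    f b ≤ f a + ⟪f' a, b - a⟫ + L / 2 * ‖b - a‖ ^ 2 := by
  set h : E → ℝ := fun x => L / 2 * ‖x‖ ^ 2 - f x with hh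
  have hd : ∀ x : E, HasGradientAt h ((2 * (L / 2)) • x - f' x) x := fun x =>
    pgd_grad_sub' (hgrad x) (L / 2)
  have hmono : ∀ x y : E,
      0 ≤ ⟪((2 * (L / 2)) • x - f' x) - ((2 * (L / 2)) • y - f' y), x - y⟫ := by
    intro x y
    have e : ((2 * (L / 2)) • x - f' x) - ((2 * (L / 2)) • y - f' y)
        = L • (x - y) - (f' x - f' y) := by
      rw [smul_sub]; module
    rw [e, inner_sub_left, real_inner_smul_left, real_inner_self_eq_norm_sq]
    have h1 : ⟪f' x - f' y, x - y⟫ ≤ L * ‖x - y‖ * ‖x - y‖ := by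
      calc ⟪f' x - f' y, x - y⟫ ≤ ‖f' x - f' y‖ * ‖x - y‖ := real_inner_le_norm _ _
        _ ≤ L * ‖x - y‖ * ‖x - y‖ :=
          mul_le_mul_of_nonneg_right (hLip x y) (norm_nonneg _)
    nlinarith [h1]
  have hconv : ConvexOn ℝ univ h := pgd_convexOn_of_mono hd hmono
  have hfo := pgd_first_order hconv (hd a) b
  have e1 : ⟪(2 * (L / 2)) • a - f' a, b - a⟫
      = L * ⟪a, b⟫ - L * ⟪a, a⟫ - ⟪f' a, b - a⟫ := by
    simp only [inner_sub_left, inner_sub_right, real_inner_smul_left]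
    ring
  have e2 : ‖b - a‖ ^ 2 = ‖b‖ ^ 2 - 2 * ⟪a, b⟫ + ‖a‖ ^ 2 := by
    rw [← real_inner_self_eq_norm_sq, ← real_inner_self_eq_norm_sq,
      ← real_inner_self_eq_norm_sq, inner_sub_sub_self]
    rw [real_inner_comm b a]; ring
  have e3 : (⟪a, a⟫ : ℝ) = ‖a‖ ^ 2 := real_inner_self_eq_norm_sq a
  rw [hh] at hfo
  simp only at hfo
  rw [e1, e3] at hfo
  rw [e2]
  linarith

lemma pgd_grad_inner_sub {f : E → ℝ} {g : E} (c : E) (x : E) (h : HasGradientAt f g x) :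
    HasGradientAt (fun z => f z - ⟪c, z⟫) (g - c) x := by
  rw [hasGradientAt_iff_hasFDerivAt] at *
  have hc : HasFDerivAt (fun z : E => (⟪c, z⟫ : ℝ))
      (InnerProductSpace.toDual ℝ E c : E →L[ℝ] ℝ) x := by
    have := (InnerProductSpace.toDual ℝ E c).hasFDerivAt (x := x)
    refine this.congr_of_eventuallyEq ?_
    filter_upwards with z
    simp [InnerProductSpace.toDual_apply_apply]
  refine (h.sub hc).congr_fderiv ?_
  ext v
  simp [InnerProductSpace.toDual_apply_apply, inner_sub_left]

lemma pgd_coco_half {f : E → ℝ} {f' : E → E} {L : ℝ} (hL : 0 < L)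
    (hgrad : ∀ x, HasGradientAt f (f' x) x)
    (hLip : ∀ a b : E, ‖f' a - f' b‖ ≤ L * ‖a - b‖)
    (hmono : ∀ a b : E, 0 ≤ ⟪f' a - f' b, a - b⟫) (a b : E) :
    f a + ⟪f' a, b - a⟫ + 1 / (2 * L) * ‖f' b - f' a‖ ^ 2 ≤ f b := by
  set F : E → ℝ := fun z => f z - ⟪f' a, z⟫ with hF
  set F' : E → E := fun z => f' z - f' a with hF'
  have hFgrad : ∀ z, HasGradientAt F (F' z) z := fun z =>
    pgd_grad_inner_sub (f' a) z (hgrad z)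
  have hFLip : ∀ x y : E, ‖F' x - F' y‖ ≤ L * ‖x - y‖ := by
    intro x y
    have : F' x - F' y = f' x - f' y := by simp only [hF', sub_sub_sub_cancel_right]
    rw [this]; exact hLip x y
  have hFmono : ∀ x y : E, 0 ≤ ⟪F' x - F' y, x - y⟫ := by
    intro x y
    have : F' x - F' y = f' x - f' y := by simp only [hF', sub_sub_sub_cancel_right]
    rw [this]; exact hmono x y
  have hFconv : ConvexOn ℝ univ F := pgd_convexOn_of_mono hFgrad hFmono
  have hmin : F a ≤ F (b - L⁻¹ • F' b) := by
    have := pgd_first_order hFconv (hFgrad a) (b - L⁻¹ • F' b)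
    have hz : F' a = 0 := by rw [hF']; simp
    rw [hz] at this
    simpa using this
  have hdesc := pgd_descent hL hFgrad hFLip b (b - L⁻¹ • F' b)
  have he : b - L⁻¹ • F' b - b = -(L⁻¹ • F' b) := by abel
  rw [he] at hdesc
  have e1 : ⟪F' b, -(L⁻¹ • F' b)⟫ = -(L⁻¹ * ‖F' b‖ ^ 2) := by
    rw [inner_neg_right, real_inner_smul_right, real_inner_self_eq_norm_sq]
  have e2 : ‖(-(L⁻¹ • F' b) : E)‖ ^ 2 = L⁻¹ ^ 2 * ‖F' b‖ ^ 2 := by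
    rw [norm_neg, norm_smul, Real.norm_eq_abs, abs_of_pos (inv_pos.mpr hL)]
    ring
  rw [e1, e2] at hdesc
  have hcomb : F a ≤ F b - 1 / (2 * L) * ‖F' b‖ ^ 2 := by
    have hLinv : L * L⁻¹ = 1 := mul_inv_cancel₀ hL.ne'
    calc F a ≤ F (b - L⁻¹ • F' b) := hmin
      _ ≤ F b + -(L⁻¹ * ‖F' b‖ ^ 2) + L / 2 * (L⁻¹ ^ 2 * ‖F' b‖ ^ 2) := hdesc
      _ = F b - 1 / (2 * L) * ‖F' b‖ ^ 2 := by field_simp; ring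
  rw [hF] at hcomb
  simp only at hcomb
  have eF : ‖F' b‖ = ‖f' b - f' a‖ := by rw [hF']
  rw [eF] at hcomb
  have einner : (⟪f' a, b⟫ : ℝ) - ⟪f' a, a⟫ = ⟪f' a, b - a⟫ := by
    rw [inner_sub_right]
  linarith [hcomb, einner.ge, einner.le]

lemma pgd_coco {f : E → ℝ} {f' : E → E} {L : ℝ} (hL : 0 < L)
    (hgrad : ∀ x, HasGradientAt f (f' x) x)
    (hLip : ∀ a b : E, ‖f' a - f' b‖ ≤ L * ‖a - b‖)
    (hmono : ∀ a b : E, 0 ≤ ⟪f' a - f' b, a - b⟫) (a b : E) :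
    ‖f' a - f' b‖ ^ 2 ≤ L * ⟪f' a - f' b, a - b⟫ := by
  have h1 := pgd_coco_half hL hgrad hLip hmono a b
  have h2 := pgd_coco_half hL hgrad hLip hmono b a
  have e1 : ⟪f' a, b - a⟫ + ⟪f' b, a - b⟫ = -⟪f' a - f' b, a - b⟫ := by
    have : (b : E) - a = -(a - b) := by abel
    rw [this, inner_neg_right, inner_sub_left]; ring
  have e2 : ‖f' a - f' b‖ = ‖f' b - f' a‖ := norm_sub_rev _ _
  rw [e2] at h2
  have h3 : L⁻¹ * ‖f' b - f' a‖ ^ 2 ≤ ⟪f' a - f' b, a - b⟫ := by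
    have he : (2:ℝ) * (1 / (2 * L)) = L⁻¹ := by field_simp
    nlinarith [h1, h2, e1]
  calc ‖f' a - f' b‖ ^ 2 = L * (L⁻¹ * ‖f' b - f' a‖ ^ 2) := by
        rw [← mul_assoc, mul_inv_cancel₀ hL.ne', one_mul, e2]
    _ ≤ L * ⟪f' a - f' b, a - b⟫ := mul_le_mul_of_nonneg_left h3 hL.le

lemma pgd_prox_subgrad {r : E → ℝ} (hr : ConvexOn ℝ univ r) {η : ℝ} (hη : 0 < η)
    {z yp : E} (hyp : ∀ u : E, r yp + 1 / (2 * η) * ‖yp - z‖ ^ 2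
      ≤ r u + 1 / (2 * η) * ‖u - z‖ ^ 2) (u : E) :
    ⟪z - yp, u - yp⟫ ≤ η * (r u - r yp) := by
  have key : ∀ t : ℝ, 0 < t → t ≤ 1 →
      ⟪z - yp, u - yp⟫ ≤ η * (r u - r yp) + t / 2 * ‖u - yp‖ ^ 2 := by
    intro t ht0 ht1
    have hcx : yp + t • (u - yp) = (1 - t) • yp + t • u := by
      rw [smul_sub]; module
    have hcv : r (yp + t • (u - yp)) ≤ (1 - t) * r yp + t * r u := by
      rw [hcx]
      simpa [smul_eq_mul] using
        hr.2 (mem_univ yp) (mem_univ u) (by linarith : (0:ℝ) ≤ 1 - t) ht0.le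
          (by ring : (1 - t) + t = 1)
    have hq := hyp (yp + t • (u - yp))
    have hnorm : ‖yp + t • (u - yp) - z‖ ^ 2
        = ‖yp - z‖ ^ 2 + 2 * t * ⟪yp - z, u - yp⟫ + t ^ 2 * ‖u - yp‖ ^ 2 := by
      have : yp + t • (u - yp) - z = (yp - z) + t • (u - yp) := by abel
      rw [this, norm_add_sq_real, real_inner_smul_right, norm_smul, Real.norm_eq_abs,
        mul_pow, sq_abs]
      ring
    rw [hnorm] at hq
    -- 0 ≤ t*(r u - r yp) + (1/(2η))*(2t⟪yp-z,u-yp⟫ + t²‖u-yp‖²)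
    have h0 : 0 ≤ t * (r u - r yp) + 1 / (2 * η) * (2 * t * ⟪yp - z, u - yp⟫)
        + 1 / (2 * η) * (t ^ 2 * ‖u - yp‖ ^ 2) := by nlinarith [hq, hcv]
    have h1 : 0 ≤ (r u - r yp) + 1 / η * ⟪yp - z, u - yp⟫
        + t / (2 * η) * ‖u - yp‖ ^ 2 := by
      have := mul_le_mul_of_nonneg_left h0 (le_of_lt (inv_pos.mpr ht0))
      rw [mul_zero] at this
      calc (0:ℝ) ≤ t⁻¹ * (t * (r u - r yp) + 1 / (2 * η) * (2 * t * ⟪yp - z, u - yp⟫)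
          + 1 / (2 * η) * (t ^ 2 * ‖u - yp‖ ^ 2)) := this
        _ = (r u - r yp) + 1 / η * ⟪yp - z, u - yp⟫ + t / (2 * η) * ‖u - yp‖ ^ 2 := by
          field_simp
    have h2 := mul_le_mul_of_nonneg_left h1 hη.le
    rw [mul_zero] at h2
    have h3 : η * ((r u - r yp) + 1 / η * ⟪yp - z, u - yp⟫
        + t / (2 * η) * ‖u - yp‖ ^ 2)
        = η * (r u - r yp) + ⟪yp - z, u - yp⟫ + t / 2 * ‖u - yp‖ ^ 2 := by
      field_simp
    rw [h3] at h2
    have h4 : ⟪z - yp, u - yp⟫ = -⟪yp - z, u - yp⟫ := by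
      have : z - yp = -(yp - z) := by abel
      rw [this, inner_neg_left]
    rw [h4]
    linarith
  refine le_of_forall_pos_le_add ?_
  intro ε hε
  set S : ℝ := ‖u - yp‖ ^ 2 with hS
  have hS0 : 0 ≤ S := sq_nonneg _
  set t : ℝ := min 1 (2 * ε / (S + 1)) with ht
  have htpos : 0 < t := lt_min one_pos (by positivity)
  have ht1 : t ≤ 1 := min_le_left _ _
  have hkey := key t htpos ht1
  have hbound : t / 2 * S ≤ ε := by
    have ht2 : t ≤ 2 * ε / (S + 1) := min_le_right _ _
    have hS1 : (0:ℝ) < S + 1 := by linarith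
    have : t * (S + 1) ≤ 2 * ε := by
      rw [← div_mul_cancel₀ (2 * ε) hS1.ne']
      exact mul_le_mul_of_nonneg_right ht2 hS1.le
    nlinarith [htpos.le]
  linarith

end PGDHelpers

set_option maxHeartbeats 1000000 in
/-- **Lower bound on the prox-gradient displacement under a biased gradient.** In the
biased-oracle setting, for `0 < η ≤ 2/L`, `‖v − ∇f(y)‖ ≤ B‖y − x̄‖`,
`y⁺ = prox_{ηr}(y − ηv)` and `g̃ = (y − y⁺)/η`, with `α̂ = α − 2B`:
`‖g̃‖ ≥ (α̂/(2(1 + ηB)))‖y − x̄‖`. -/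
theorem prox_gradient_displacement_lower_bound
    {E : Type*} [NormedAddCommGroup E] [InnerProductSpace ℝ E] [FiniteDimensional ℝ E]
    (f : E → ℝ) (f' : E → E) (r : E → ℝ)
    (α L B : ℝ) (hα : 0 < α) (hL : 0 < L) (hB : 0 ≤ B)
    (hgrad : ∀ x : E, HasGradientAt f (f' x) x)
    (hsc : ConvexOn ℝ univ (fun x => f x - α / 2 * ‖x‖ ^ 2))
    (hLip : ∀ x y : E, ‖f' x - f' y‖ ≤ L * ‖x - y‖)
    (hr : ConvexOn ℝ univ r)
    (xbar : E) (hxbar : ∀ y : E, f xbar + r xbar ≤ f y + r y)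
    (η : ℝ) (hη0 : 0 < η) (hη : η ≤ 2 / L)
    (y v : E) (hv : ‖v - f' y‖ ≤ B * ‖y - xbar‖)
    (yp : E)
    (hyp : ∀ u : E, r yp + 1 / (2 * η) * ‖yp - (y - η • v)‖ ^ 2
      ≤ r u + 1 / (2 * η) * ‖u - (y - η • v)‖ ^ 2) :
    ‖η⁻¹ • (y - yp)‖ ≥ (α - 2 * B) / (2 * (1 + η * B)) * ‖y - xbar‖ := by
  have hmono : ∀ a b : E, α * ‖a - b‖ ^ 2 ≤ ⟪f' a - f' b, a - b⟫ :=
    pgd_mono hgrad hsc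
  have hmono0 : ∀ a b : E, 0 ≤ ⟪f' a - f' b, a - b⟫ := fun a b =>
    le_trans (by positivity) (hmono a b)
  have hcoco := pgd_coco hL hgrad hLip hmono0
  -- subgradient inequality for r at xbar applied to yp
  have hxsub : r xbar - r yp ≤ ⟪f' xbar, yp - xbar⟫ := by
    have hs := pgd_tendsto_slope (hgrad xbar) (yp - xbar)
    have hb : ∀ᶠ t in 𝓝[>] (0:ℝ),
        r xbar - r yp ≤ (f (xbar + t • (yp - xbar)) - f xbar) / t := by
      filter_upwards [Ioc_mem_nhdsGT_of_mem (by simp : (0:ℝ) ∈ Ico (0:ℝ) 1)] with t ht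
      obtain ⟨ht0, ht1⟩ := ht
      have hcx : xbar + t • (yp - xbar) = (1 - t) • xbar + t • yp := by
        rw [smul_sub]; module
      have hcv : r (xbar + t • (yp - xbar)) ≤ (1 - t) * r xbar + t * r yp := by
        rw [hcx]
        simpa [smul_eq_mul] using
          hr.2 (mem_univ xbar) (mem_univ yp) (by linarith : (0:ℝ) ≤ 1 - t) ht0.le
            (by ring : (1 - t) + t = 1)
      have hopt := hxbar (xbar + t • (yp - xbar))
      rw [le_div_iff₀ ht0]
      nlinarith [hopt, hcv]
    exact ge_of_tendsto hs hb
  -- prox subgradient inequality at xbar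
  have hprox := pgd_prox_subgrad hr hη0 hyp xbar
  have h6 : ⟪(y - η • v) - yp, xbar - yp⟫ ≤ η * ⟪f' xbar, yp - xbar⟫ :=
    le_trans hprox (mul_le_mul_of_nonneg_left hxsub hη0.le)
  -- the key monotonicity inequality
  have key0 : 0 ≤ ⟪y - yp, y - xbar⟫ - ‖y - yp‖ ^ 2 - η * ⟪v - f' y, y - xbar⟫
        + η * ⟪v - f' y, y - yp⟫ - η * ⟪f' y - f' xbar, y - xbar⟫
        + η * ⟪f' y - f' xbar, y - yp⟫ := by
    have key0' : 0 ≤ ⟪(y - yp) - η • ((v - f' y) + (f' y - f' xbar)),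
        (y - xbar) - (y - yp)⟫ := by
      have e1 : (y - yp) - η • ((v - f' y) + (f' y - f' xbar))
          = ((y - η • v) - yp) + η • (f' xbar) := by module
      have e2 : (y - xbar) - (y - yp) = yp - xbar := by abel
      rw [e1, e2, inner_add_left, real_inner_smul_left]
      have e3 : ⟪(y - η • v) - yp, yp - xbar⟫ = -⟪(y - η • v) - yp, xbar - yp⟫ := by
        rw [show yp - xbar = -(xbar - yp) by abel, inner_neg_right]
      rw [e3]
      linarith [h6]
    have expand : ⟪(y - yp) - η • ((v - f' y) + (f' y - f' xbar)),
        (y - xbar) - (y - yp)⟫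
        = ⟪y - yp, y - xbar⟫ - ‖y - yp‖ ^ 2 - η * ⟪v - f' y, y - xbar⟫
          + η * ⟪v - f' y, y - yp⟫ - η * ⟪f' y - f' xbar, y - xbar⟫
          + η * ⟪f' y - f' xbar, y - yp⟫ := by
      simp only [inner_sub_left, inner_sub_right, inner_add_left, inner_add_right,
        real_inner_smul_left, real_inner_smul_right, ← real_inner_self_eq_norm_sq,
        real_inner_comm]
      ring
    rw [expand] at key0'
    exact key0'
  -- bounds
  have a1 : ⟪y - yp, y - xbar⟫ ≤ ‖y - yp‖ * ‖y - xbar‖ := real_inner_le_norm _ _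
  have a2 : -(B * ‖y - xbar‖ * ‖y - xbar‖) ≤ ⟪v - f' y, y - xbar⟫ := by
    have h1 : |(⟪v - f' y, y - xbar⟫ : ℝ)| ≤ ‖v - f' y‖ * ‖y - xbar‖ :=
      abs_real_inner_le_norm _ _
    have h2 : ‖v - f' y‖ * ‖y - xbar‖ ≤ B * ‖y - xbar‖ * ‖y - xbar‖ :=
      mul_le_mul_of_nonneg_right hv (norm_nonneg _)
    have h3 := neg_abs_le (⟪v - f' y, y - xbar⟫ : ℝ)
    linarith
  have a3 : ⟪v - f' y, y - yp⟫ ≤ B * ‖y - xbar‖ * ‖y - yp‖ := by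
    have h1 : (⟪v - f' y, y - yp⟫ : ℝ) ≤ ‖v - f' y‖ * ‖y - yp‖ := real_inner_le_norm _ _
    have h2 : ‖v - f' y‖ * ‖y - yp‖ ≤ B * ‖y - xbar‖ * ‖y - yp‖ :=
      mul_le_mul_of_nonneg_right hv (norm_nonneg _)
    linarith
  have a4 : α * ‖y - xbar‖ ^ 2 ≤ ⟪f' y - f' xbar, y - xbar⟫ := hmono y xbar
  have a5 : ‖f' y - f' xbar‖ ^ 2 ≤ L * ⟪f' y - f' xbar, y - xbar⟫ := hcoco y xbar
  have a6 : ⟪f' y - f' xbar, y - yp⟫ ≤ ‖f' y - f' xbar‖ * ‖y - yp‖ :=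
    real_inner_le_norm _ _
  have a7 : η * L ≤ 2 := by
    rw [le_div_iff₀ hL] at hη; linarith
  have hnorm : ‖η⁻¹ • (y - yp)‖ = η⁻¹ * ‖y - yp‖ := by
    rw [norm_smul, Real.norm_eq_abs, abs_of_pos (inv_pos.mpr hη0)]
  have hU0' : 0 ≤ ‖y - xbar‖ := norm_nonneg _
  have hD0' : 0 ≤ ‖y - yp‖ := norm_nonneg _
  have hW0' : 0 ≤ ‖f' y - f' xbar‖ := norm_nonneg _
  rw [ge_iff_le, hnorm]
  -- replace everything by opaque scalars
  obtain ⟨U, hUdef⟩ : ∃ t : ℝ, ‖y - xbar‖ = t := ⟨_, rfl⟩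
  obtain ⟨D, hDdef⟩ : ∃ t : ℝ, ‖y - yp‖ = t := ⟨_, rfl⟩
  obtain ⟨W, hWdef⟩ : ∃ t : ℝ, ‖f' y - f' xbar‖ = t := ⟨_, rfl⟩
  obtain ⟨Idu, hIdu⟩ : ∃ t : ℝ, (⟪y - yp, y - xbar⟫ : ℝ) = t := ⟨_, rfl⟩
  obtain ⟨Ieu, hIeu⟩ : ∃ t : ℝ, (⟪v - f' y, y - xbar⟫ : ℝ) = t := ⟨_, rfl⟩
  obtain ⟨Ied, hIed⟩ : ∃ t : ℝ, (⟪v - f' y, y - yp⟫ : ℝ) = t := ⟨_, rfl⟩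
  obtain ⟨Iwu, hIwu⟩ : ∃ t : ℝ, (⟪f' y - f' xbar, y - xbar⟫ : ℝ) = t := ⟨_, rfl⟩
  obtain ⟨Iwd, hIwd⟩ : ∃ t : ℝ, (⟪f' y - f' xbar, y - yp⟫ : ℝ) = t := ⟨_, rfl⟩
  rw [hDdef, hIdu, hIeu, hIed, hIwu, hIwd] at key0
  rw [hUdef, hDdef, hIdu] at a1
  rw [hUdef, hIeu] at a2
  rw [hUdef, hDdef, hIed] at a3
  rw [hUdef, hIwu] at a4
  rw [hWdef, hIwu] at a5
  rw [hWdef, hDdef, hIwd] at a6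
  rw [hUdef] at hU0'
  rw [hDdef] at hD0'
  rw [hWdef] at hW0'
  rw [hUdef, hDdef]
  -- now pure scalar arithmetic
  have h2L : (0:ℝ) ≤ 2 * L := by linarith
  have st1 : η * Iwu ≤ Idu - D ^ 2 - η * Ieu + η * Ied + η * Iwd := by
    nlinarith [key0]
  have p1 := mul_le_mul_of_nonneg_left st1 h2L
  have p2 := mul_le_mul_of_nonneg_left (mul_le_mul_of_nonneg_left a4 hη0.le) hL.le
  have p3 := mul_le_mul_of_nonneg_left a5 hη0.le
  have p4 := mul_le_mul_of_nonneg_left (mul_le_mul_of_nonneg_left a6 hη0.le) h2L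
  have m4 : 2 * L * (W * D) ≤ W ^ 2 + L ^ 2 * D ^ 2 := by nlinarith [sq_nonneg (W - L * D)]
  have p5 := mul_le_mul_of_nonneg_left m4 hη0.le
  have p6 := mul_le_mul_of_nonneg_left (mul_le_mul_of_nonneg_left a3 hη0.le) h2L
  have p7 := mul_le_mul_of_nonneg_left (mul_le_mul_of_nonneg_left a2 hη0.le) h2L
  have p8 := mul_le_mul_of_nonneg_left a1 h2L
  have p9 : 0 ≤ (2 - η * L) * D ^ 2 := mul_nonneg (by linarith) (sq_nonneg D)
  have penult : L * (η * (α * U ^ 2))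
      ≤ L * (2 * (D * U) + 2 * (η * (B * U * D)) + 2 * (η * (B * U ^ 2))) := by
    nlinarith [p1, p2, p3, p4, p5, p6, p7, p8, p9]
  have penult2 : η * (α * U ^ 2)
      ≤ 2 * (D * U) + 2 * (η * (B * U * D)) + 2 * (η * (B * U ^ 2)) :=
    le_of_mul_le_mul_left penult hL
  -- conclude
  have hP : (0:ℝ) < 1 + η * B := by nlinarith
  rw [div_mul_eq_mul_div, div_le_iff₀ (by positivity : (0:ℝ) < 2 * (1 + η * B))]
  rcases hU0'.eq_or_lt with hUz | hUpos
  · rw [← hUz]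
    have : (0:ℝ) ≤ η⁻¹ * D * (2 * (1 + η * B)) := by positivity
    linarith
  · have key' : (η * ((α - 2 * B) * U)) * U ≤ (2 * (1 + η * B) * D) * U := by
      nlinarith [penult2]
    have hq := le_of_mul_le_mul_right key' hUpos
    calc (α - 2 * B) * U = η⁻¹ * (η * ((α - 2 * B) * U)) := by
          field_simp
      _ ≤ η⁻¹ * (2 * (1 + η * B) * D) :=
          mul_le_mul_of_nonneg_left hq (inv_pos.mpr hη0).le
      _ = η⁻¹ * D * (2 * (1 + η * B)) := by ring
end
end
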